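/- arXiv:1307.6435 — 9 statements merged into one kernel-verified Lean document; each statement's English description precedes it below -/
import Mathlib

section
/- Let (u_{n,t})_{n≥1}, indexed by t ∈ (0,1), be a family of sequences of complex numbers such that: (i) sup_{n≥1} |u_{n,t}| → 0 as t → 1⁻; (ii) there exist M > 0 and α ∈ (0,1) such that ∑_{n≥1} |u_{n,t}| ≤ M for all t ∈ (α,1); (iii) there exists S ∈ ℂ such that ∑_{n≥1} u_{n,t} → S as t → 1⁻. Then the infinite product ∏_{n≥1} (1 + u_{n,t}) converges for t close to 1 and lim_{t→1⁻} ∏_{n≥1} (1 + u_{n,t}) = e^{S}. -/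
open Filter Topology

private lemma log_one_add_sub_self_le_sq {z : ℂ} (hz : ‖z‖ ≤ 1/2) :
    ‖Complex.log (1 + z) - z‖ ≤ ‖z‖ ^ 2 := by
  have h1 : ‖z‖ < 1 := lt_of_le_of_lt hz (by norm_num)
  refine (Complex.norm_log_one_add_sub_self_le h1).trans ?_
  have h2 : (1 - ‖z‖)⁻¹ ≤ 2 := by
    rw [inv_eq_one_div, div_le_iff₀ (by linarith)]; linarith
  have h3 : (0:ℝ) ≤ ‖z‖^2 := sq_nonneg _
  nlinarith

/-- If `(u_{n,t})` is a family of complex sequences such that `sup_n |u_{n,t}| → 0`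
as `t → 1⁻`, the sums `∑_n |u_{n,t}|` are uniformly bounded for `t` near `1`, and
`∑_n u_{n,t} → S` as `t → 1⁻`, then the infinite product `∏_n (1 + u_{n,t})`
converges for `t` close to `1` and tends to `e^S` as `t → 1⁻`. -/
theorem prod_one_add_tendsto_exp
    (u : ℝ → ℕ → ℂ) (S : ℂ)
    -- (i) `sup_{n} |u_{n,t}| → 0` as `t → 1⁻`
    (h1 : ∀ ε > (0 : ℝ), ∀ᶠ t in 𝓝[<] (1 : ℝ), ∀ n, ‖u t n‖ ≤ ε)
    -- (ii) uniform bound on `∑_n |u_{n,t}|` for `t ∈ (α, 1)`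
    (h2 : ∃ M > (0 : ℝ), ∃ α ∈ Set.Ioo (0 : ℝ) 1, ∀ t ∈ Set.Ioo α 1,
      ∀ N : ℕ, ∑ n ∈ Finset.range N, ‖u t n‖ ≤ M)
    -- (iii) `∑_n u_{n,t} → S` as `t → 1⁻`
    (h3 : Tendsto (fun t => ∑' n, u t n) (𝓝[<] (1 : ℝ)) (𝓝 S)) :
    ∀ ε > (0 : ℝ), ∀ᶠ t in 𝓝[<] (1 : ℝ), ∃ p : ℂ,
      Tendsto (fun N => ∏ n ∈ Finset.range N, (1 + u t n)) atTop (𝓝 p) ∧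
      ‖p - Complex.exp S‖ ≤ ε := by
  obtain ⟨M, hM, α, hα, hbound⟩ := h2
  intro ε hε
  -- continuity of exp at S
  obtain ⟨η, hη, hexp⟩ : ∃ η > (0:ℝ), ∀ z : ℂ, ‖z - S‖ < η →
      ‖Complex.exp z - Complex.exp S‖ ≤ ε := by
    have := Metric.continuousAt_iff.mp (Complex.continuous_exp.continuousAt (x := S))
    obtain ⟨δ, hδ, hd⟩ := this ε hε
    refine ⟨δ, hδ, fun z hz => le_of_lt ?_⟩
    have hz' : dist z S < δ := by simpa [dist_eq_norm] using hz
    have := hd hz'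
    simpa [dist_eq_norm] using this
  set δ0 : ℝ := min (1/2) (η / (2 * M)) with hδ0def
  have hδ0pos : 0 < δ0 := lt_min (by norm_num) (by positivity)
  have hδ0half : δ0 ≤ 1/2 := min_le_left _ _
  have hδ0M : δ0 * M ≤ η / 2 := by
    have : δ0 ≤ η / (2 * M) := min_le_right _ _
    calc δ0 * M ≤ η / (2 * M) * M := by nlinarith
    _ = η / 2 := by field_simp
  have E1 := h1 δ0 hδ0pos
  have E2 : Set.Ioo α 1 ∈ 𝓝[<] (1:ℝ) :=
    Ioo_mem_nhdsLT_of_mem ⟨hα.2, le_refl 1⟩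
  have E3 : ∀ᶠ t in 𝓝[<] (1:ℝ), ‖(∑' n, u t n) - S‖ < η / 2 := by
    have := h3 (Metric.ball_mem_nhds S (by positivity : (0:ℝ) < η/2))
    filter_upwards [this] with t ht
    simpa [dist_eq_norm] using ht
  filter_upwards [E1, E2, E3] with t ht1 ht2 ht3
  have hsum : Summable (fun n => ‖u t n‖) :=
    summable_of_sum_range_le (fun n => norm_nonneg _) (hbound t ht2)
  have husum : Summable (u t) := hsum.of_norm
  have htsumM : ∑' n, ‖u t n‖ ≤ M :=
    Summable.tsum_le_of_sum_range_le hsum (hbound t ht2)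
  have hne : ∀ n, 1 + u t n ≠ 0 := by
    intro n h
    have : ‖u t n‖ = 1 := by
      have : u t n = -1 := by linear_combination h
      simp [this]
    have := ht1 n
    have := hδ0half
    linarith
  -- log bounds
  have hlogb : ∀ n, ‖Complex.log (1 + u t n) - u t n‖ ≤ δ0 * ‖u t n‖ := by
    intro n
    refine (log_one_add_sub_self_le_sq ((ht1 n).trans hδ0half)).trans ?_
    have := ht1 n
    have := norm_nonneg (u t n)
    nlinarith [sq_nonneg (‖u t n‖)]
  have hsumdiff : Summable (fun n => Complex.log (1 + u t n) - u t n) :=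
    Summable.of_norm_bounded (hsum.mul_left δ0) hlogb
  have hlogsum : Summable (fun n => Complex.log (1 + u t n)) := by
    have := hsumdiff.add husum
    simpa using this
  set L : ℂ := ∑' n, Complex.log (1 + u t n) with hL
  refine ⟨Complex.exp L, ?_, ?_⟩
  · -- partial products tend to exp L
    have hps : Tendsto (fun N => ∑ n ∈ Finset.range N, Complex.log (1 + u t n))
        atTop (𝓝 L) := hlogsum.hasSum.tendsto_sum_nat
    have := (Complex.continuous_exp.continuousAt (x := L)).tendsto.comp hps
    refine this.congr (fun N => ?_)
    simp only [Function.comp_apply]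
    rw [Complex.exp_sum]
    exact Finset.prod_congr rfl fun n _ => Complex.exp_log (hne n)
  · -- norm bound
    have hdiff : L - (∑' n, u t n) = ∑' n, (Complex.log (1 + u t n) - u t n) :=
      (Summable.tsum_sub hlogsum husum).symm
    have hnd : ‖L - (∑' n, u t n)‖ ≤ δ0 * M := by
      rw [hdiff]
      refine (norm_tsum_le_tsum_norm (hsumdiff.norm)).trans ?_
      calc ∑' n, ‖Complex.log (1 + u t n) - u t n‖
          ≤ ∑' n, δ0 * ‖u t n‖ := Summable.tsum_le_tsum hlogb hsumdiff.norm (hsum.mul_left δ0)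
        _ = δ0 * ∑' n, ‖u t n‖ := tsum_mul_left
        _ ≤ δ0 * M := by nlinarith
    have hLS : ‖L - S‖ < η := by
      calc ‖L - S‖ ≤ ‖L - (∑' n, u t n)‖ + ‖(∑' n, u t n) - S‖ := by
            simpa using norm_sub_le_norm_sub_add_norm_sub L (∑' n, u t n) S
        _ < δ0 * M + η/2 := by linarith
        _ ≤ η := by linarith
    exact hexp L hLS
end

section
/- (Cramér's lemma, first part.) Let Z be a real random variable with E(Z) = 0 and E(|Z|³) < ∞, and let φ_Z(ξ) = E(e^{iξZ}) be its characteristic function. Then for every ξ ∈ ℝ, |φ_Z(ξ)|² ≤ exp(−ξ² E(Z²) + (4/3)|ξ|³ E(|Z|³)). -/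
open MeasureTheory Filter Topology
open scoped ENNReal

section TaylorAux
open Complex

lemma taylor_aux (x : ℝ) (hx : 0 ≤ x) :
    ∀ t ∈ Set.Icc (0:ℝ) x,
      ‖Complex.exp (Complex.I * t) - 1 - Complex.I * t + (t:ℂ)^2/2‖ ≤ t^3/6 := by
  have hD : ∀ t : ℝ, HasDerivAt (fun s : ℝ => Complex.exp (Complex.I * s))
      (Complex.I * Complex.exp (Complex.I * t)) t := by
    intro t
    have h1 : HasDerivAt (fun s : ℝ => (Complex.I * s)) Complex.I t := by
      simpa using (Complex.ofRealCLM.hasDerivAt (x := t)).const_mul Complex.I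
    simpa [mul_comm] using h1.cexp
  have hL : ∀ t : ℝ, HasDerivAt (fun s : ℝ => (Complex.I * s)) Complex.I t := by
    intro t
    simpa using (Complex.ofRealCLM.hasDerivAt (x := t)).const_mul Complex.I
  -- Step 1 : ‖exp(It) - 1‖ ≤ t
  have h1 : ∀ t ∈ Set.Icc (0:ℝ) x, ‖Complex.exp (Complex.I * t) - 1‖ ≤ t := by
    have := image_norm_le_of_norm_deriv_right_le_deriv_boundary
      (f := fun s : ℝ => Complex.exp (Complex.I * s) - 1)
      (f' := fun s : ℝ => Complex.I * Complex.exp (Complex.I * s))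
      (a := 0) (b := x)
      (fun s _ => (((hD s).sub_const 1).continuousAt.continuousWithinAt))
      (fun s _ => ((hD s).sub_const 1).hasDerivWithinAt)
      (B := fun t => t) (B' := fun _ => 1)
      (by simp) (fun t => hasDerivAt_id t)
      (fun s _ => by simp [Complex.norm_exp, Complex.mul_re])
    exact fun t ht => this ht
  -- Step 2 : ‖exp(It) - 1 - It‖ ≤ t²/2
  have h2 : ∀ t ∈ Set.Icc (0:ℝ) x,
      ‖Complex.exp (Complex.I * t) - 1 - Complex.I * t‖ ≤ t^2/2 := by
    have hder : ∀ t : ℝ, HasDerivAt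
        (fun s : ℝ => Complex.exp (Complex.I * s) - 1 - Complex.I * s)
        (Complex.I * (Complex.exp (Complex.I * t) - 1)) t := by
      intro t
      have := ((hD t).sub_const 1).sub (hL t)
      exact this.congr_deriv (by ring)
    have hB : ∀ t : ℝ, HasDerivAt (fun t : ℝ => t^2/2) t t := by
      intro t
      have := ((hasDerivAt_id t).pow 2).div_const 2
      simpa using this
    have := image_norm_le_of_norm_deriv_right_le_deriv_boundary
      (f := fun s : ℝ => Complex.exp (Complex.I * s) - 1 - Complex.I * s)
      (f' := fun s : ℝ => Complex.I * (Complex.exp (Complex.I * s) - 1))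
      (a := 0) (b := x)
      (fun s _ => ((hder s).continuousAt.continuousWithinAt))
      (fun s _ => (hder s).hasDerivWithinAt)
      (B := fun t => t^2/2) (B' := fun t => t)
      (by simp) hB
      (fun s hs => by
        rw [norm_mul, Complex.norm_I, one_mul]
        exact h1 s ⟨hs.1, hs.2.le⟩)
    exact fun t ht => this ht
  -- Step 3
  have hder : ∀ t : ℝ, HasDerivAt
      (fun s : ℝ => Complex.exp (Complex.I * s) - 1 - Complex.I * s + (s:ℂ)^2/2)
      (Complex.I * (Complex.exp (Complex.I * t) - 1 - Complex.I * t)) t := by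
    intro t
    have h0 : HasDerivAt (fun s : ℝ => ((s:ℝ):ℂ)) 1 t := by
      exact Complex.ofRealCLM.hasDerivAt (x := t)
    have hsq : HasDerivAt (fun s : ℝ => ((s:ℂ))^2/2) (t:ℂ) t := by
      have := (h0.mul h0).div_const 2
      simp only [pow_two]
      exact this.congr_deriv (by ring)
    have := (((hD t).sub_const 1).sub (hL t)).add hsq
    have heq : Complex.I * Complex.exp (Complex.I * t) - Complex.I + (t:ℂ)
        = Complex.I * (Complex.exp (Complex.I * t) - 1 - Complex.I * t) := by
      ring_nf
      simp [Complex.I_sq]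
    rw [← heq]
    exact this
  have hB : ∀ t : ℝ, HasDerivAt (fun t : ℝ => t^3/6) (t^2/2) t := by
    intro t
    have := ((hasDerivAt_id t).pow 3).div_const 6
    norm_num at this
    exact this.congr_deriv (by ring)
  have := image_norm_le_of_norm_deriv_right_le_deriv_boundary
    (f := fun s : ℝ => Complex.exp (Complex.I * s) - 1 - Complex.I * s + (s:ℂ)^2/2)
    (f' := fun s : ℝ => Complex.I * (Complex.exp (Complex.I * s) - 1 - Complex.I * s))
    (a := 0) (b := x)
    (fun s _ => ((hder s).continuousAt.continuousWithinAt))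
    (fun s _ => (hder s).hasDerivWithinAt)
    (B := fun t => t^3/6) (B' := fun t => t^2/2)
    (by simp) hB
    (fun s hs => by
      rw [norm_mul, Complex.norm_I, one_mul]
      exact h2 s ⟨hs.1, hs.2.le⟩)
  exact fun t ht => this ht

lemma taylor3 (x : ℝ) :
    ‖Complex.exp (Complex.I * x) - 1 - Complex.I * x + (x:ℂ)^2/2‖ ≤ |x|^3/6 := by
  rcases le_total 0 x with hx | hx
  · rw [_root_.abs_of_nonneg hx]
    exact taylor_aux x hx x ⟨hx, le_rfl⟩
  · have hy : (0:ℝ) ≤ -x := neg_nonneg.2 hx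
    have h := taylor_aux (-x) hy (-x) ⟨hy, le_rfl⟩
    rw [_root_.abs_of_nonpos hx]
    have hconj : Complex.exp (Complex.I * x) - 1 - Complex.I * x + (x:ℂ)^2/2
        = starRingEnd ℂ (Complex.exp (Complex.I * (-x:ℝ)) - 1 - Complex.I * (-x:ℝ)
            + ((-x:ℝ):ℂ)^2/2) := by
      push_cast
      simp [map_sub, map_add, map_mul, map_div₀, Complex.conj_I, Complex.conj_ofReal,
        ← Complex.exp_conj, map_ofNat]
      ring_nf
    rw [hconj, RCLike.norm_conj]
    simpa using h

end TaylorAux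

lemma integral_ofReal'' {α : Type*} [MeasurableSpace α] (μ : Measure α) (f : α → ℝ) :
    ∫ x, ((f x : ℝ) : ℂ) ∂μ = ((∫ x, f x ∂μ : ℝ) : ℂ) :=
  integral_ofReal

/-- Cramér's lemma, first part: if `Z` is a centered real random variable with
`E|Z|³ < ∞`, then for every `ξ ∈ ℝ`,
`|φ_Z(ξ)|² ≤ exp(−ξ² E(Z²) + (4/3)|ξ|³ E|Z|³)`. -/
theorem cramer_charFun_bound
    {Ω : Type*} [MeasurableSpace Ω] (P : Measure Ω) [IsProbabilityMeasure P]
    (Z : Ω → ℝ) (hZ3 : MemLp Z 3 P) (hZmean : ∫ ω, Z ω ∂P = 0) (ξ : ℝ) :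
    ‖∫ ω, Complex.exp (Complex.I * (ξ : ℂ) * ((Z ω : ℝ) : ℂ)) ∂P‖ ^ 2 ≤
      Real.exp (-ξ ^ 2 * (∫ ω, Z ω ^ 2 ∂P) + (4 / 3) * |ξ| ^ 3 * ∫ ω, |Z ω| ^ 3 ∂P) := by
  set m2 : ℝ := ∫ ω, Z ω ^ 2 ∂P with hm2def
  set m3 : ℝ := ∫ ω, |Z ω| ^ 3 ∂P with hm3def
  set φ : ℂ := ∫ ω, Complex.exp (Complex.I * (ξ : ℂ) * ((Z ω : ℝ) : ℂ)) ∂P with hφdef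
  -- measurability / integrability
  have hZm : AEStronglyMeasurable Z P := hZ3.1
  have hZ1 : Integrable Z P := hZ3.integrable (by norm_num)
  have hZ2 : Integrable (fun ω => Z ω ^ 2) P :=
    (hZ3.mono_exponent (by norm_num : (2:ℝ≥0∞) ≤ 3)).integrable_sq
  have hZ3i : Integrable (fun ω => |Z ω| ^ 3) P := by
    have := hZ3.integrable_norm_rpow (by norm_num) (by norm_num)
    simp only [ENNReal.toReal_ofNat] at this
    convert this using 2 with ω
    rw [Real.norm_eq_abs, ← Real.rpow_natCast |Z ω| 3]
    norm_num
  have hm2nn : 0 ≤ m2 := integral_nonneg fun ω => sq_nonneg _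
  have hm3nn : 0 ≤ m3 := integral_nonneg fun ω => by positivity
  have hexpm : AEStronglyMeasurable
      (fun ω => Complex.exp (Complex.I * (ξ : ℂ) * ((Z ω : ℝ) : ℂ))) P := by
    exact (Complex.continuous_exp.comp
      ((continuous_const.mul Complex.continuous_ofReal))).comp_aestronglyMeasurable hZm
  have hexpnorm : ∀ ω, ‖Complex.exp (Complex.I * (ξ : ℂ) * ((Z ω : ℝ) : ℂ))‖ = 1 := by
    intro ω
    rw [Complex.norm_exp]
    simp [Complex.mul_re]
  have hexpint : Integrable (fun ω => Complex.exp (Complex.I * (ξ : ℂ) * ((Z ω : ℝ) : ℂ))) P :=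
    (integrable_const (1:ℝ)).mono' hexpm (Filter.Eventually.of_forall fun ω => (hexpnorm ω).le)
  -- |φ| ≤ 1
  have hφ1 : ‖φ‖ ≤ 1 := by
    rw [hφdef]
    calc ‖∫ ω, Complex.exp (Complex.I * (ξ : ℂ) * ((Z ω : ℝ) : ℂ)) ∂P‖
        ≤ ∫ ω, ‖Complex.exp (Complex.I * (ξ : ℂ) * ((Z ω : ℝ) : ℂ))‖ ∂P :=
          norm_integral_le_integral_norm _
      _ = 1 := by simp [hexpnorm]
  -- Taylor bound on φ
  set a : ℝ := ξ^2 * m2 / 2 with hadef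
  set b : ℝ := |ξ|^3 * m3 / 6 with hbdef
  have hann : 0 ≤ a := by positivity
  have hbnn : 0 ≤ b := by positivity
  have hφc : ‖φ - ((1 - a : ℝ) : ℂ)‖ ≤ b := by
    set Pol : Ω → ℂ := fun ω =>
      (1:ℂ) + Complex.I * ((ξ * Z ω : ℝ):ℂ) - (((ξ * Z ω)^2 : ℝ):ℂ)/2 with hPol
    have hc1 : Integrable (fun ω => ((ξ * Z ω : ℝ):ℂ)) P := (hZ1.const_mul ξ).ofReal
    have hc2 : Integrable (fun ω => (((ξ * Z ω)^2 : ℝ):ℂ)) P := by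
      have : Integrable (fun ω => ξ^2 * Z ω ^2) P := hZ2.const_mul (ξ^2)
      have h2 : Integrable (fun ω => (ξ * Z ω)^2) P := by
        convert this using 2 with ω; ring
      exact h2.ofReal
    have hPint : Integrable Pol P := by
      refine (((integrable_const (1:ℂ)).add (hc1.const_mul Complex.I)).sub
        (hc2.div_const 2))
    have hPolint : ∫ ω, Pol ω ∂P = ((1 - a : ℝ) : ℂ) := by
      have e1 : ∫ ω, ξ * Z ω ∂P = 0 := by
        rw [integral_const_mul, hZmean, mul_zero]
      have e2 : ∫ ω, (ξ * Z ω)^2 ∂P = ξ^2 * m2 := by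
        rw [hm2def, ← integral_const_mul]
        congr 1 with ω; ring
      have h1 : Integrable (fun ω => (1:ℂ) + Complex.I * ((ξ * Z ω : ℝ):ℂ)) P := by
        exact (integrable_const _).add (hc1.const_mul _)
      have h2 : Integrable (fun ω => (((ξ * Z ω)^2 : ℝ):ℂ)/2) P := hc2.div_const 2
      have h1a : Integrable (fun _ : Ω => (1:ℂ)) P := integrable_const 1
      have h1b : Integrable (fun ω => Complex.I * ((ξ * Z ω : ℝ):ℂ)) P := hc1.const_mul _
      rw [hPol]
      rw [integral_sub h1 h2, integral_add h1a h1b, integral_const, integral_const_mul,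
        integral_div, integral_ofReal'' P, integral_ofReal'' P, e1, e2, hadef]
      push_cast
      simp
    have hsub : φ - ((1 - a : ℝ) : ℂ)
        = ∫ ω, (Complex.exp (Complex.I * (ξ : ℂ) * ((Z ω : ℝ) : ℂ)) - Pol ω) ∂P := by
      rw [integral_sub hexpint hPint, hPolint, hφdef]
    rw [hsub]
    have hbd : ∀ ω, ‖Complex.exp (Complex.I * (ξ : ℂ) * ((Z ω : ℝ) : ℂ)) - Pol ω‖
        ≤ |ξ|^3 * |Z ω|^3 / 6 := by
      intro ω
      have := taylor3 (ξ * Z ω)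
      have heq : Complex.exp (Complex.I * (ξ : ℂ) * ((Z ω : ℝ) : ℂ)) - Pol ω
          = Complex.exp (Complex.I * ((ξ * Z ω : ℝ):ℂ)) - 1 - Complex.I * ((ξ * Z ω : ℝ):ℂ)
            + ((ξ * Z ω : ℝ):ℂ)^2/2 := by
        rw [hPol]; push_cast; ring
      rw [heq]
      calc ‖Complex.exp (Complex.I * ((ξ * Z ω : ℝ):ℂ)) - 1 - Complex.I * ((ξ * Z ω : ℝ):ℂ)
            + ((ξ * Z ω : ℝ):ℂ)^2/2‖ ≤ |ξ * Z ω|^3/6 := this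
        _ = |ξ|^3 * |Z ω|^3 / 6 := by rw [abs_mul, mul_pow]
    have hgint : Integrable (fun ω => |ξ|^3 * |Z ω|^3 / 6) P := (hZ3i.const_mul _).div_const 6
    calc ‖∫ ω, (Complex.exp (Complex.I * (ξ : ℂ) * ((Z ω : ℝ) : ℂ)) - Pol ω) ∂P‖
        ≤ ∫ ω, |ξ|^3 * |Z ω|^3 / 6 ∂P :=
          norm_integral_le_of_norm_le hgint (Filter.Eventually.of_forall hbd)
      _ = b := by
          rw [hbdef, hm3def]
          rw [show (fun ω => |ξ|^3 * |Z ω|^3 / 6) = fun ω => (|ξ|^3/6) * |Z ω|^3 by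
            funext ω; ring, integral_const_mul]
          ring
  -- Lyapunov : m2 ≤ m3 ^ (2/3)
  have hlyap : m2 ≤ m3 ^ ((2:ℝ)/3) := by
    have hpq : Real.HolderConjugate (3/2) 3 := ⟨by norm_num, by norm_num, by norm_num⟩
    have hof : ENNReal.ofReal ((3:ℝ)/2) = 3/2 := by
      rw [ENNReal.ofReal_div_of_pos (by norm_num)]
      norm_num
    have hf : MemLp (fun ω => |Z ω|^2) (ENNReal.ofReal ((3:ℝ)/2)) P := by
      have h := hZ3.norm_rpow_div 2
      rw [hof]
      have h32 : (3:ℝ≥0∞)/2 = (3:ℝ≥0∞)/(2:ℝ≥0∞) := rfl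
      convert h using 2 with ω
      rw [Real.norm_eq_abs, ← Real.rpow_natCast |Z ω| 2]
      norm_num
    have hg : MemLp (fun _ : Ω => (1:ℝ)) (ENNReal.ofReal (3:ℝ)) P := memLp_const 1
    have key := integral_mul_le_Lp_mul_Lq_of_nonneg hpq
      (Filter.Eventually.of_forall (fun ω => by positivity))
      (Filter.Eventually.of_forall (fun _ => zero_le_one)) hf hg
    have e1 : ∫ ω, |Z ω|^2 * 1 ∂P = m2 := by
      rw [hm2def]; congr 1 with ω; rw [mul_one, sq_abs]
    have e2 : ∫ ω, (|Z ω|^2 : ℝ)^((3:ℝ)/2) ∂P = m3 := by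
      rw [hm3def]; congr 1 with ω
      rw [← Real.rpow_natCast |Z ω| 2, ← Real.rpow_mul (abs_nonneg _),
        ← Real.rpow_natCast |Z ω| 3]
      norm_num
    have e3 : ∫ ω, ((1:ℝ)) ^ (3:ℝ) ∂P = 1 := by simp
    rw [e1, e2, e3] at key
    simpa using key
  -- final computation
  have hRHS : -ξ ^ 2 * m2 + (4 / 3) * |ξ| ^ 3 * m3 = -2*a + 8*b := by
    rw [hadef, hbdef]; ring
  rw [hRHS]
  rcases le_or_gt a 1 with ha | ha
  · have hφle : ‖φ‖ ≤ 1 - a + b := by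
      calc ‖φ‖ ≤ ‖((1 - a : ℝ) : ℂ)‖ + ‖φ - ((1-a:ℝ):ℂ)‖ := by
            calc ‖φ‖ = ‖((1-a:ℝ):ℂ) + (φ - ((1-a:ℝ):ℂ))‖ := by ring_nf
              _ ≤ _ := norm_add_le _ _
        _ ≤ (1 - a) + b := by
            rw [Complex.norm_real, Real.norm_eq_abs, _root_.abs_of_nonneg (by linarith)]
            exact add_le_add le_rfl hφc
    have h0 : (0:ℝ) ≤ 1 - a + b := by linarith
    calc ‖φ‖ ^ 2 ≤ (1 - a + b)^2 := by
          exact pow_le_pow_left₀ (norm_nonneg φ) hφle 2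
      _ ≤ Real.exp (b - a) ^ 2 := by
          apply pow_le_pow_left₀ h0
          have := Real.add_one_le_exp (b - a)
          linarith
      _ = Real.exp (2*(b-a)) := by
          rw [sq, ← Real.exp_add]
          ring_nf
      _ ≤ Real.exp (-2*a + 8*b) := by
          apply Real.exp_le_exp.2
          linarith
  · -- a > 1 : RHS ≥ 1
    have h2a : 2*a ≤ (6*b)^((2:ℝ)/3) := by
      have h1 : 2*a = ξ^2 * m2 := by rw [hadef]; ring
      have h2 : (6:ℝ)*b = |ξ|^3 * m3 := by rw [hbdef]; ring
      rw [h1, h2]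
      calc ξ^2 * m2 ≤ ξ^2 * m3 ^ ((2:ℝ)/3) := by
            exact mul_le_mul_of_nonneg_left hlyap (sq_nonneg ξ)
        _ = (|ξ|^3 * m3)^((2:ℝ)/3) := by
            rw [Real.mul_rpow (by positivity) hm3nn]
            congr 1
            rw [← Real.rpow_natCast |ξ| 3, ← Real.rpow_mul (abs_nonneg ξ)]
            norm_num
      -- note: fix below
    have hab : a ≤ 4*b := by
      have h2apos : (2:ℝ) < 2*a := by linarith
      have h6b : (2*a)^((3:ℝ)/2) ≤ 6*b := by
        have h6bnn : (0:ℝ) ≤ 6*b := by linarith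
        have := Real.rpow_le_rpow (by linarith) h2a (by norm_num : (0:ℝ) ≤ 3/2)
        rwa [← Real.rpow_mul h6bnn, show ((2:ℝ)/3)*(3/2) = 1 by norm_num, Real.rpow_one] at this
      have hs : 2*a*Real.sqrt 2 ≤ (2*a)^((3:ℝ)/2) := by
        have h2ann : (0:ℝ) ≤ 2*a := by linarith
        rw [show (3:ℝ)/2 = 1 + 1/2 by norm_num, Real.rpow_add (by linarith), Real.rpow_one,
          ← Real.sqrt_eq_rpow]
        exact mul_le_mul_of_nonneg_left (Real.sqrt_le_sqrt (by linarith)) h2ann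
      have hsqrt2 : (1:ℝ) ≤ Real.sqrt 2 := by
        rw [show (1:ℝ) = Real.sqrt 1 by simp]
        exact Real.sqrt_le_sqrt (by norm_num)
      nlinarith [hs, h6b, hsqrt2, ha]
    calc ‖φ‖ ^ 2 ≤ 1 := by
          nlinarith [norm_nonneg φ, hφ1]
      _ ≤ Real.exp (-2*a + 8*b) := by
          rw [show (1:ℝ) = Real.exp 0 by simp]
          apply Real.exp_le_exp.2
          linarith
end

section
/- (Cramér's lemma, second part.) Let Z be a real random variable with E(Z) = 0 and 0 < E(|Z|³) < ∞, and let φ_Z(ξ) = E(e^{iξZ}) be its characteristic function. If |ξ| ≤ (1/2)·E(Z²)/E(|Z|³), then |φ_Z(ξ)|² ≤ exp(−(ξ²/3) E(Z²)). -/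
open MeasureTheory Filter Topology
open scoped ENNReal NNReal

private lemma hasDerivAt_expI (t : ℝ) :
    HasDerivAt (fun s : ℝ => Complex.exp (Complex.I * s)) (Complex.I * Complex.exp (Complex.I * t)) t := by
  have h : HasDerivAt (fun s : ℝ => (Complex.I * s : ℂ)) Complex.I t := by
    simpa using ((hasDerivAt_id t).ofReal_comp (z := t)).const_mul Complex.I
  simpa [mul_comm] using h.cexp

private lemma taylor_step {f f' : ℝ → ℂ} (hf : ∀ t, HasDerivAt f (f' t) t)
    (hc : Continuous f') (h0 : f 0 = 0) {C : ℝ} {n : ℕ}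
    (hb : ∀ t, 0 ≤ t → ‖f' t‖ ≤ C * t ^ n) {x : ℝ} (hx : 0 ≤ x) :
    ‖f x‖ ≤ C * x ^ (n + 1) / (n + 1) := by
  have hfx : f x = ∫ t in (0:ℝ)..x, f' t := by
    rw [intervalIntegral.integral_eq_sub_of_hasDerivAt (fun t _ => hf t)
      (hc.intervalIntegrable _ _), h0, sub_zero]
  have hbound : IntervalIntegrable (fun t : ℝ => C * t ^ n) MeasureTheory.volume 0 x :=
    (continuous_const.mul (continuous_pow n)).intervalIntegrable _ _
  have h1 : ‖∫ t in (0:ℝ)..x, f' t‖ ≤ |∫ t in (0:ℝ)..x, C * t ^ n| := by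
    refine intervalIntegral.norm_integral_le_abs_of_norm_le ?_ hbound
    refine (ae_restrict_iff' measurableSet_uIoc).2 (ae_of_all _ fun t ht => ?_)
    have ht' : 0 ≤ t := by
      rw [Set.uIoc_of_le hx] at ht
      exact le_of_lt ht.1
    simpa using hb t ht'
  have h2 : ∫ t in (0:ℝ)..x, C * t ^ n = C * x ^ (n + 1) / (n + 1) := by
    rw [intervalIntegral.integral_const_mul, integral_pow]
    ring
  have h3 : 0 ≤ C * x ^ (n + 1) / (n + 1) := by
    have hC : 0 ≤ C := by
      have := hb 1 zero_le_one
      simpa using (norm_nonneg _).trans this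
    positivity
  calc ‖f x‖ = ‖∫ t in (0:ℝ)..x, f' t‖ := by rw [hfx]
    _ ≤ |∫ t in (0:ℝ)..x, C * t ^ n| := h1
    _ = C * x ^ (n + 1) / (n + 1) := by rw [h2, abs_of_nonneg h3]

private lemma expI_bound1 {x : ℝ} (hx : 0 ≤ x) :
    ‖Complex.exp (Complex.I * x) - 1‖ ≤ x := by
  have := taylor_step (f := fun s : ℝ => Complex.exp (Complex.I * s) - 1)
    (f' := fun s : ℝ => Complex.I * Complex.exp (Complex.I * s))
    (fun t => (hasDerivAt_expI t).sub_const 1)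
    (by continuity) (by simp) (C := 1) (n := 0)
    (fun t ht => by simp [Complex.norm_exp]) hx
  simpa using this

private lemma expI_bound2 {x : ℝ} (hx : 0 ≤ x) :
    ‖Complex.exp (Complex.I * x) - 1 - Complex.I * x‖ ≤ x ^ 2 / 2 := by
  have := taylor_step (f := fun s : ℝ => Complex.exp (Complex.I * s) - 1 - Complex.I * s)
    (f' := fun s : ℝ => Complex.I * (Complex.exp (Complex.I * s) - 1))
    (fun t => by
      have h1 := (hasDerivAt_expI t).sub_const 1
      have h2 : HasDerivAt (fun s : ℝ => (Complex.I * s : ℂ)) Complex.I t := by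
        simpa using ((hasDerivAt_id t).ofReal_comp (z := t)).const_mul Complex.I
      have h3 := h1.sub h2
      rw [show Complex.I * (Complex.exp (Complex.I * t) - 1) = Complex.I * Complex.exp (Complex.I * t) - Complex.I by ring]
      exact h3)
    (by continuity) (by simp) (C := 1) (n := 1)
    (fun t ht => by
      simpa [norm_mul, Complex.norm_I] using expI_bound1 ht) hx
  have h5 : (1 : ℝ) * x ^ (1 + 1) / ((1 : ℕ) + 1) = x ^ 2 / 2 := by norm_num
  rw [h5] at this
  exact this

private lemma expI_bound3 {x : ℝ} (hx : 0 ≤ x) :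
    ‖Complex.exp (Complex.I * x) - (1 + Complex.I * x - x ^ 2 / 2)‖ ≤ x ^ 3 / 6 := by
  have := taylor_step
    (f := fun s : ℝ => Complex.exp (Complex.I * s) - (1 + Complex.I * s - (s : ℂ) ^ 2 / 2))
    (f' := fun s : ℝ => Complex.I * (Complex.exp (Complex.I * s) - 1 - Complex.I * s))
    (fun t => by
      have h1 := hasDerivAt_expI t
      have h2 : HasDerivAt (fun s : ℝ => (Complex.I * s : ℂ)) Complex.I t := by
        simpa using ((hasDerivAt_id t).ofReal_comp (z := t)).const_mul Complex.I
      have h3 : HasDerivAt (fun s : ℝ => ((s : ℂ) ^ 2 / 2)) ((t : ℂ)) t := by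
        have h4 : HasDerivAt (fun s : ℝ => ((s : ℂ))) 1 t := by
          simpa using (hasDerivAt_id t).ofReal_comp (z := t)
        have := (h4.mul h4).div_const 2
        have heq : ((1 : ℂ) * t + (t : ℂ) * 1) / 2 = (t : ℂ) := by ring
        rw [heq] at this
        convert this using 2 with s
        · rfl
        · simp only [Pi.mul_apply]; ring
      have := h1.sub ((h2.const_add 1).sub h3)
      convert this using 1
      · rfl
      · rfl
      push_cast
      ring_nf
      rw [Complex.I_sq]
      ring)
    (by continuity) (by simp) (C := 1/2) (n := 2)
    (fun t ht => by
      have := expI_bound2 ht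
      calc ‖Complex.I * (Complex.exp (Complex.I * t) - 1 - Complex.I * t)‖
          = ‖Complex.exp (Complex.I * t) - 1 - Complex.I * t‖ := by
            rw [norm_mul, Complex.norm_I, one_mul]
        _ ≤ t ^ 2 / 2 := this
        _ = 1/2 * t ^ 2 := by ring) hx
  calc ‖Complex.exp (Complex.I * x) - (1 + Complex.I * x - (x:ℂ) ^ 2 / 2)‖
      ≤ 1/2 * x ^ (2+1) / (2+1) := by exact_mod_cast this
    _ = x ^ 3 / 6 := by ring

/-- Third-order Taylor bound for `e^{ix}`, all real `x`. -/
private lemma expI_taylor3 (x : ℝ) :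
    ‖Complex.exp (Complex.I * x) - (1 + Complex.I * x - x ^ 2 / 2)‖ ≤ |x| ^ 3 / 6 := by
  rcases le_total 0 x with hx | hx
  · rw [abs_of_nonneg hx]; exact expI_bound3 hx
  · have hy : 0 ≤ -x := neg_nonneg.2 hx
    have h := expI_bound3 hy
    rw [abs_of_nonpos hx]
    have hconj : Complex.exp (Complex.I * (-x : ℝ)) - (1 + Complex.I * (-x : ℝ) - ((-x : ℝ) : ℂ) ^ 2 / 2)
        = starRingEnd ℂ (Complex.exp (Complex.I * x) - (1 + Complex.I * x - (x : ℂ) ^ 2 / 2)) := by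
      simp [map_sub, map_add, map_mul, map_div₀, map_pow, map_ofNat, Complex.conj_I, Complex.conj_ofReal, ← Complex.exp_conj]
    rw [hconj, Complex.norm_conj] at h
    exact h

/-- Cramér's lemma, second part: if `Z` is a centered real random variable with
`0 < E|Z|³ < ∞` and `|ξ| ≤ (1/2) E(Z²)/E|Z|³`, then
`|φ_Z(ξ)|² ≤ exp(−(ξ²/3) E(Z²))`. -/
theorem cramer_charFun_bound_small
    {Ω : Type*} [MeasurableSpace Ω] (P : Measure Ω) [IsProbabilityMeasure P]
    (Z : Ω → ℝ) (hZ3 : MemLp Z 3 P) (hZmean : ∫ ω, Z ω ∂P = 0)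
    (hZ3pos : 0 < ∫ ω, |Z ω| ^ 3 ∂P)
    (ξ : ℝ) (hξ : |ξ| ≤ (1 / 2) * (∫ ω, Z ω ^ 2 ∂P) / ∫ ω, |Z ω| ^ 3 ∂P) :
    ‖∫ ω, Complex.exp (Complex.I * (ξ : ℂ) * ((Z ω : ℝ) : ℂ)) ∂P‖ ^ 2 ≤
      Real.exp (-(ξ ^ 2 / 3) * ∫ ω, Z ω ^ 2 ∂P) := by
  set m2 := ∫ ω, Z ω ^ 2 ∂P with hm2def
  set m3 := ∫ ω, |Z ω| ^ 3 ∂P with hm3def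
  have hZae : AEStronglyMeasurable Z P := hZ3.aestronglyMeasurable
  have hZ2 : MemLp Z 2 P := hZ3.mono_exponent (by norm_num)
  have hZ1 : Integrable Z P := hZ3.integrable (by norm_num)
  have hZ2i : Integrable (fun ω => Z ω ^ 2) P := hZ2.integrable_sq
  have hZ3i : Integrable (fun ω => |Z ω| ^ 3) P := by
    have h := hZ3.integrable_norm_rpow (by norm_num) (by norm_num)
    refine h.congr (Filter.Eventually.of_forall fun ω => ?_)
    show ‖Z ω‖ ^ ((3:ℝ≥0∞)).toReal = |Z ω| ^ 3
    simp only [ENNReal.toReal_ofNat, Real.norm_eq_abs]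
    rw [show ((3:ℝ)) = ((3:ℕ):ℝ) by norm_num, Real.rpow_natCast]
  have hm2nn : 0 ≤ m2 := integral_nonneg fun ω => sq_nonneg _
  -- Lyapunov inequality `m2 ≤ m3 ^ (2/3)` via Hölder
  have hpq : Real.HolderConjugate (3/2) 3 := Real.holderConjugate_iff.2 ⟨by norm_num, by norm_num⟩
  have hfmem : MemLp (fun ω => Z ω ^ 2) (ENNReal.ofReal (3/2)) P := by
    have h := hZ3.norm_rpow_div 2
    have h32 : (3 : ℝ≥0∞) / 2 = ENNReal.ofReal (3/2) := by
      rw [ENNReal.ofReal_div_of_pos (by norm_num)]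
      norm_num
    rw [h32] at h
    have heq : (fun x => ‖Z x‖ ^ (2:ℝ≥0∞).toReal) =ᵐ[P] fun ω => Z ω ^ 2 :=
      Filter.Eventually.of_forall fun ω => by
        simp only [ENNReal.toReal_ofNat, Real.norm_eq_abs]
        rw [show ((2:ℝ)) = ((2:ℕ):ℝ) by norm_num, Real.rpow_natCast, sq_abs]
    exact (memLp_congr_ae heq).1 h
  have hgmem : MemLp (fun _ : Ω => (1:ℝ)) (ENNReal.ofReal 3) P := memLp_const 1
  have hH := integral_mul_le_Lp_mul_Lq_of_nonneg hpq
    (Filter.Eventually.of_forall fun ω => sq_nonneg (Z ω))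
    (Filter.Eventually.of_forall fun _ => zero_le_one) hfmem hgmem
  have hHs : m2 ≤ m3 ^ ((2:ℝ)/3) := by
    have e1 : ∫ ω, Z ω ^ 2 * 1 ∂P = m2 := by simp [hm2def]
    have e2 : ∫ ω, (Z ω ^ 2 : ℝ) ^ ((3:ℝ)/2) ∂P = m3 := by
      rw [hm3def]
      refine integral_congr_ae (Filter.Eventually.of_forall fun ω => ?_)
      show (Z ω ^ 2 : ℝ) ^ ((3:ℝ)/2) = |Z ω| ^ 3
      rw [← sq_abs, ← Real.rpow_natCast |Z ω| 2, ← Real.rpow_mul (abs_nonneg _),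
        ← Real.rpow_natCast |Z ω| 3]
      norm_num
    have e3 : ∫ ω, ((1:ℝ)) ^ (3:ℝ) ∂P = 1 := by simp
    rw [e1, e2, e3] at hH
    simpa [one_div] using hH
  have hm2cube : m2 ^ 3 ≤ m3 ^ 2 := by
    have h1 : m2 ^ 3 ≤ (m3 ^ ((2:ℝ)/3)) ^ 3 := pow_le_pow_left₀ hm2nn hHs 3
    have h2 : (m3 ^ ((2:ℝ)/3)) ^ 3 = m3 ^ 2 := by
      rw [← Real.rpow_natCast (m3 ^ ((2:ℝ)/3)) 3, ← Real.rpow_mul hZ3pos.le,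
        ← Real.rpow_natCast m3 2]
      norm_num
    linarith
  -- from the hypothesis on ξ
  have hξm3 : |ξ| * m3 ≤ 1/2 * m2 := by
    have := (le_div_iff₀ hZ3pos).1 hξ
    linarith
  have hA2 : (|ξ| * m3) ^ 2 ≤ (1/2 * m2) ^ 2 := by
    refine pow_le_pow_left₀ (by positivity) hξm3 2
  have hkey : ξ^2 * m2 * m3^2 ≤ m3^2 / 4 := by
    have he : ξ^2 * m2 * m3^2 = (|ξ| * m3)^2 * m2 := by rw [mul_pow, sq_abs]; ring
    rw [he]
    calc (|ξ| * m3)^2 * m2 ≤ (1/2 * m2)^2 * m2 := mul_le_mul_of_nonneg_right hA2 hm2nn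
      _ = m2^3/4 := by ring
      _ ≤ m3^2/4 := by linarith
  have hm3sq : 0 < m3^2 := by positivity
  have ha : ξ^2 * m2 ≤ 1/4 := by
    by_contra hcon
    push_neg at hcon
    have := mul_lt_mul_of_pos_right hcon hm3sq
    linarith
  -- integrability of the various complex integrands
  have hZc : AEStronglyMeasurable (fun ω => ((Z ω : ℝ) : ℂ)) P :=
    Complex.continuous_ofReal.comp_aestronglyMeasurable hZae
  have hexpm : AEStronglyMeasurable (fun ω => Complex.exp (Complex.I * (ξ:ℂ) * ((Z ω : ℝ):ℂ))) P :=
    Complex.continuous_exp.comp_aestronglyMeasurable (hZc.const_mul _)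
  have hexpi : Integrable (fun ω => Complex.exp (Complex.I * (ξ:ℂ) * ((Z ω : ℝ):ℂ))) P := by
    refine (integrable_const (1:ℝ)).mono' hexpm (Filter.Eventually.of_forall fun ω => ?_)
    simp [Complex.norm_exp]
  have hg1 : Integrable (fun ω => Complex.I * ((ξ * Z ω : ℝ) : ℂ)) P :=
    ((hZ1.const_mul ξ).ofReal).const_mul _
  have hg2 : Integrable (fun ω => ((ξ * Z ω : ℝ) : ℂ)^2 / 2) P := by
    have : Integrable (fun ω => ((ξ * Z ω)^2 : ℝ)) P := by
      have := hZ2i.const_mul (ξ^2)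
      refine this.congr (Filter.Eventually.of_forall fun ω => ?_)
      ring
    have h2 : Integrable (fun x => (((ξ * Z x) ^ 2 : ℝ) : ℂ)) P := this.ofReal
    refine (h2.div_const 2).congr (Filter.Eventually.of_forall fun ω => ?_)
    push_cast
    ring_nf
  have hgsum : Integrable (fun ω => (1:ℂ) + Complex.I * ((ξ * Z ω : ℝ) : ℂ)) P := by
    exact (integrable_const 1).add hg1
  have hgi : Integrable (fun ω => (1 + Complex.I * ((ξ * Z ω : ℝ) : ℂ) - ((ξ * Z ω : ℝ) : ℂ)^2 / 2)) P := by
    exact hgsum.sub hg2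
  have hgint : ∫ ω, (1 + Complex.I * ((ξ * Z ω : ℝ) : ℂ) - ((ξ * Z ω : ℝ) : ℂ)^2 / 2) ∂P
      = 1 - ((ξ^2 * m2 / 2 : ℝ) : ℂ) := by
    rw [integral_sub hgsum hg2, integral_add (integrable_const 1) hg1]
    have i1 : ∫ _ : Ω, (1:ℂ) ∂P = 1 := by simp
    have i2 : ∫ ω, Complex.I * ((ξ * Z ω : ℝ) : ℂ) ∂P = 0 := by
      rw [integral_const_mul]
      have i2' : ∫ ω, ((ξ * Z ω : ℝ) : ℂ) ∂P = ((∫ ω, ξ * Z ω ∂P : ℝ) : ℂ) := integral_ofReal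
      have i2'' : ∫ ω, ξ * Z ω ∂P = 0 := by
        rw [integral_const_mul, hZmean, mul_zero]
      rw [i2', i2'']
      simp
    have i3 : ∫ ω, ((ξ * Z ω : ℝ) : ℂ)^2 / 2 ∂P = ((ξ^2 * m2 / 2 : ℝ) : ℂ) := by
      have e : (fun ω => ((ξ * Z ω : ℝ) : ℂ)^2 / 2) = fun ω => (((ξ * Z ω)^2 / 2 : ℝ) : ℂ) := by
        funext ω; push_cast; ring
      rw [e]
      have i3' : ∫ ω, (((ξ * Z ω)^2 / 2 : ℝ) : ℂ) ∂P = ((∫ ω, (ξ * Z ω)^2 / 2 ∂P : ℝ) : ℂ) :=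
        integral_ofReal
      have i3'' : ∫ ω, (ξ * Z ω)^2 / 2 ∂P = ξ^2 * m2 / 2 := by
        rw [show (fun ω => (ξ * Z ω)^2/2) = fun ω => ξ^2/2 * Z ω ^2 by funext ω; ring]
        rw [integral_const_mul, ← hm2def]
        ring
      rw [i3', i3'']
    rw [i1, i2, i3, add_zero]
  -- Taylor bound on the integral
  have hnorm : ‖(∫ ω, Complex.exp (Complex.I * (ξ:ℂ) * ((Z ω : ℝ):ℂ)) ∂P)
      - (1 - ((ξ^2 * m2 / 2 : ℝ) : ℂ))‖ ≤ |ξ|^3 * m3 / 6 := by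
    rw [← hgint, ← integral_sub hexpi hgi]
    have hb : ∀ ω, ‖Complex.exp (Complex.I * (ξ:ℂ) * ((Z ω : ℝ):ℂ))
        - (1 + Complex.I * ((ξ * Z ω : ℝ) : ℂ) - ((ξ * Z ω : ℝ) : ℂ)^2 / 2)‖
        ≤ |ξ|^3 * |Z ω|^3 / 6 := by
      intro ω
      have harg : Complex.I * (ξ:ℂ) * ((Z ω : ℝ):ℂ) = Complex.I * ((ξ * Z ω : ℝ) : ℂ) := by
        push_cast; ring
      rw [harg]
      have := expI_taylor3 (ξ * Z ω)
      calc ‖Complex.exp (Complex.I * ((ξ * Z ω : ℝ):ℂ))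
            - (1 + Complex.I * ((ξ * Z ω : ℝ) : ℂ) - ((ξ * Z ω : ℝ) : ℂ)^2 / 2)‖
          ≤ |ξ * Z ω|^3 / 6 := this
        _ = |ξ|^3 * |Z ω|^3 / 6 := by rw [abs_mul, mul_pow]
    calc ‖∫ ω, (Complex.exp (Complex.I * (ξ:ℂ) * ((Z ω : ℝ):ℂ))
          - (1 + Complex.I * ((ξ * Z ω : ℝ) : ℂ) - ((ξ * Z ω : ℝ) : ℂ)^2 / 2)) ∂P‖
        ≤ ∫ ω, ‖Complex.exp (Complex.I * (ξ:ℂ) * ((Z ω : ℝ):ℂ))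
          - (1 + Complex.I * ((ξ * Z ω : ℝ) : ℂ) - ((ξ * Z ω : ℝ) : ℂ)^2 / 2)‖ ∂P :=
          norm_integral_le_integral_norm _
      _ ≤ ∫ ω, |ξ|^3 * |Z ω|^3 / 6 ∂P := by
          refine integral_mono (hexpi.sub hgi).norm ((hZ3i.const_mul _).div_const _) hb
      _ = |ξ|^3 * m3 / 6 := by
          rw [hm3def, integral_div, integral_const_mul]
  -- combine
  have habsc : ‖(1:ℂ) - ((ξ^2 * m2 / 2 : ℝ) : ℂ)‖ = 1 - ξ^2 * m2 / 2 := by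
    rw [show ((1:ℂ) - ((ξ^2 * m2 / 2 : ℝ) : ℂ)) = (((1 - ξ^2 * m2 / 2 : ℝ)) : ℂ) by push_cast; ring,
      Complex.norm_real, Real.norm_eq_abs, abs_of_nonneg (by linarith)]
  have hξ3 : |ξ|^3 * m3 ≤ ξ^2 * (1/2 * m2) := by
    calc |ξ|^3 * m3 = ξ^2 * (|ξ| * m3) := by rw [← sq_abs]; ring
      _ ≤ ξ^2 * (1/2 * m2) := mul_le_mul_of_nonneg_left hξm3 (sq_nonneg ξ)
  have hφle : ‖∫ ω, Complex.exp (Complex.I * (ξ:ℂ) * ((Z ω : ℝ):ℂ)) ∂P‖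
      ≤ 1 - 5/12 * (ξ^2 * m2) := by
    have h1 := norm_add_le
      ((∫ ω, Complex.exp (Complex.I * (ξ:ℂ) * ((Z ω : ℝ):ℂ)) ∂P) - (1 - ((ξ^2 * m2 / 2 : ℝ) : ℂ)))
      (1 - ((ξ^2 * m2 / 2 : ℝ) : ℂ))
    rw [sub_add_cancel, habsc] at h1
    calc ‖∫ ω, Complex.exp (Complex.I * (ξ:ℂ) * ((Z ω : ℝ):ℂ)) ∂P‖
        ≤ |ξ|^3 * m3 / 6 + (1 - ξ^2 * m2 / 2) := by linarith [hnorm]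
      _ ≤ ξ^2 * (1/2 * m2) / 6 + (1 - ξ^2 * m2 / 2) := by linarith [hξ3]
      _ = 1 - 5/12 * (ξ^2 * m2) := by ring
  have hanneg : 0 ≤ ξ^2 * m2 := mul_nonneg (sq_nonneg ξ) hm2nn
  have h5 : (0:ℝ) ≤ 1 - 5/12 * (ξ^2 * m2) := by linarith
  have hsq : ‖∫ ω, Complex.exp (Complex.I * (ξ:ℂ) * ((Z ω : ℝ):ℂ)) ∂P‖ ^ 2
      ≤ (1 - 5/12 * (ξ^2 * m2))^2 :=
    pow_le_pow_left₀ (norm_nonneg _) hφle 2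
  have e1 : 1 - 5/12 * (ξ^2 * m2) ≤ Real.exp (-(5/12 * (ξ^2 * m2))) := by
    linarith [Real.add_one_le_exp (-(5/12 * (ξ^2 * m2)))]
  have hexp2 : (1 - 5/12 * (ξ^2 * m2))^2 ≤ Real.exp (-(ξ ^ 2 / 3) * m2) := by
    calc (1 - 5/12 * (ξ^2 * m2))^2 ≤ Real.exp (-(5/12 * (ξ^2 * m2)))^2 :=
          pow_le_pow_left₀ h5 e1 2
      _ = Real.exp (-(5/6 * (ξ^2 * m2))) := by
          rw [sq, ← Real.exp_add]; ring_nf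
      _ ≤ Real.exp (-(ξ ^ 2 / 3) * m2) := by
          refine Real.exp_le_exp.2 ?_
          nlinarith [hanneg]
  linarith [hsq, hexp2]
end

section
/- For integers a ≥ 1, p ≥ 1, q ≥ 1, one has, as r → 0⁺: ∑_{k=1}^{∞} k^p e^{−a k r}/(1+e^{−k r})^q = (1/r^{p+1}) ∫₀^{∞} u^p e^{−a u}/(1+e^{−u})^q du + O(1/r^p). -/
open Filter Topology

open MeasureTheory Set Nat


noncomputable def Nf (a p : ℕ) : ℝ → ℝ := fun u => u ^ p * Real.exp (-(a:ℝ) * u)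
noncomputable def Nf' (a p : ℕ) : ℝ → ℝ :=
  fun u => (p:ℝ) * u ^ (p - 1) * Real.exp (-(a:ℝ) * u) + u ^ p * (Real.exp (-(a:ℝ) * u) * (-(a:ℝ) * 1))
noncomputable def Df (q : ℕ) : ℝ → ℝ := fun u => (1 + Real.exp (-u)) ^ q
noncomputable def Df' (q : ℕ) : ℝ → ℝ :=
  fun u => (q:ℝ) * (1 + Real.exp (-u)) ^ (q - 1) * (Real.exp (-u) * -1)
noncomputable def Ff (a p q : ℕ) : ℝ → ℝ := fun u => Nf a p u / Df q u
noncomputable def Ff' (a p q : ℕ) : ℝ → ℝ :=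
  fun u => (Nf' a p u * Df q u - Nf a p u * Df' q u) / (Df q u) ^ 2
noncomputable def Pc (p : ℕ) : ℝ := (p)! * 2 ^ p * Real.exp 1
noncomputable def Kc (a p q : ℕ) : ℝ := 2 ^ q * ((p:ℝ) + a + q) * Pc p

lemma Df_pos (q : ℕ) (u : ℝ) : 0 < Df q u := by
  have := Real.exp_pos (-u); unfold Df; positivity

lemma Pc_pos (p : ℕ) : 0 < Pc p := by
  unfold Pc; have := Real.exp_pos 1; have := Nat.factorial_pos p; positivity

lemma hasDerivAt_Ff (a p q : ℕ) (u : ℝ) : HasDerivAt (Ff a p q) (Ff' a p q u) u :=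
  ((hasDerivAt_pow p u).mul (((hasDerivAt_id u).const_mul (-(a:ℝ))).exp)).div
    ((((hasDerivAt_id u).neg.exp).const_add 1).pow q) (Df_pos q u).ne'

lemma cont_Ff' (a p q : ℕ) : Continuous (Ff' a p q) := by
  apply Continuous.div
  · apply Continuous.sub
    · apply Continuous.mul
      · unfold Nf'; fun_prop
      · unfold Df; fun_prop
    · apply Continuous.mul
      · unfold Nf; fun_prop
      · unfold Df'; fun_prop
  · unfold Df; fun_prop
  · intro u; exact pow_ne_zero 2 (Df_pos q u).ne'

lemma cont_Ff (a p q : ℕ) : Continuous (Ff a p q) := by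
  apply Continuous.div
  · unfold Nf; fun_prop
  · unfold Df; fun_prop
  · intro u; exact (Df_pos q u).ne'

lemma Ff_nonneg (a p q : ℕ) {u : ℝ} (hu : 0 ≤ u) : 0 ≤ Ff a p q u := by
  unfold Ff Nf
  have h1 := (Real.exp_pos (-(a:ℝ) * u)).le
  have h2 := Df_pos q u
  positivity

lemma pow_le_factorial_mul_exp {x : ℝ} (hx : 0 ≤ x) (n : ℕ) :
    x ^ n ≤ (n)! * Real.exp x := by
  have h := Real.sum_le_exp_of_nonneg hx (n + 1)
  have h2 : x ^ n / (n)! ≤ Real.exp x := by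
    refine le_trans ?_ h
    exact Finset.single_le_sum (f := fun i => x ^ i / (i)!)
      (fun i _ => by positivity) (Finset.self_mem_range_succ n)
  have hfac : (0:ℝ) < (n)! := by positivity
  calc x ^ n = (x ^ n / (n)!) * (n)! := by field_simp
    _ ≤ Real.exp x * (n)! := by gcongr
    _ = (n)! * Real.exp x := by ring

lemma one_add_pow_mul_exp_le (n : ℕ) {x : ℝ} (hx : 0 ≤ x) :
    (1 + x) ^ n * Real.exp (-x) ≤ Pc n * Real.exp (-(1/2) * x) := by
  have h1 : ((1 + x)/2) ^ n ≤ (n)! * Real.exp ((1 + x)/2) :=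
    pow_le_factorial_mul_exp (by linarith) n
  have h2 : (1 + x) ^ n ≤ (n)! * 2 ^ n * Real.exp ((1 + x)/2) := by
    have : (1 + x) ^ n = ((1 + x)/2) ^ n * 2 ^ n := by
      rw [div_pow]; field_simp
    rw [this]
    calc ((1 + x)/2) ^ n * 2 ^ n ≤ ((n)! * Real.exp ((1+x)/2)) * 2 ^ n := by gcongr
      _ = (n)! * 2 ^ n * Real.exp ((1+x)/2) := by ring
  unfold Pc
  calc (1 + x) ^ n * Real.exp (-x) ≤ ((n)! * 2 ^ n * Real.exp ((1 + x)/2)) * Real.exp (-x) := by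
        have := Real.exp_pos (-x); gcongr
    _ = ((n)! * 2 ^ n) * Real.exp ((1 + x)/2 + -x) := by rw [Real.exp_add]; ring
    _ ≤ ((n)! * 2 ^ n * Real.exp 1) * Real.exp (-(1/2) * x) := by
        rw [mul_assoc ((n)! * 2 ^ n : ℝ), ← Real.exp_add]
        have h3 : (1 + x)/2 + -x ≤ 1 + -(1/2) * x := by linarith
        gcongr ((n)! * 2 ^ n : ℝ) * Real.exp ?_

lemma Ff_le (a p q : ℕ) (ha : 1 ≤ a) {u : ℝ} (hu : 0 ≤ u) :
    Ff a p q u ≤ Pc p * Real.exp (-(1/2) * u) := by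
  have ha' : (1:ℝ) ≤ (a:ℝ) := by exact_mod_cast ha
  have hEle : Real.exp (-(a:ℝ) * u) ≤ Real.exp (-u) := by
    apply Real.exp_le_exp.mpr; nlinarith
  have hD1 : (1:ℝ) ≤ Df q u := by
    unfold Df; apply one_le_pow₀; linarith [Real.exp_pos (-u)]
  have hup : u ^ p ≤ (1 + u) ^ p := pow_le_pow_left₀ hu (by linarith) p
  calc Ff a p q u ≤ Nf a p u := by
        unfold Ff
        exact div_le_self (by unfold Nf; positivity) hD1
    _ ≤ (1 + u) ^ p * Real.exp (-u) := by
        unfold Nf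
        exact mul_le_mul hup hEle (Real.exp_pos _).le (by positivity)
    _ ≤ Pc p * Real.exp (-(1/2) * u) := one_add_pow_mul_exp_le p hu

lemma Ff'_bound (a p q : ℕ) (ha : 1 ≤ a) {u : ℝ} (hu : 0 ≤ u) :
    |Ff' a p q u| ≤ Kc a p q * Real.exp (-(1/2) * u) := by
  have he1pos : 0 < Real.exp (-u) := Real.exp_pos _
  have he1le : Real.exp (-u) ≤ 1 := Real.exp_le_one_iff.mpr (by linarith)
  have ha' : (1:ℝ) ≤ (a:ℝ) := by exact_mod_cast ha
  have hEle : Real.exp (-(a:ℝ) * u) ≤ Real.exp (-u) := by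
    apply Real.exp_le_exp.mpr; nlinarith
  have hEpos := Real.exp_pos (-(a:ℝ) * u)
  have hD1 : (1:ℝ) ≤ Df q u := by unfold Df; apply one_le_pow₀; linarith
  have hDle : Df q u ≤ 2 ^ q := by unfold Df; apply pow_le_pow_left₀ (by positivity) (by linarith)
  have hu1 : (1:ℝ) ≤ 1 + u := by linarith
  have hup : u ^ p ≤ (1 + u) ^ p := pow_le_pow_left₀ hu (by linarith) p
  have hup1 : u ^ (p - 1) ≤ (1 + u) ^ p :=
    le_trans (pow_le_pow_left₀ hu (by linarith) _) (pow_le_pow_right₀ hu1 (Nat.sub_le p 1))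
  have hN' : |Nf' a p u| ≤ ((p:ℝ) + a) * ((1 + u) ^ p * Real.exp (-u)) := by
    unfold Nf'
    have h1 : |(p:ℝ) * u ^ (p - 1) * Real.exp (-(a:ℝ) * u)| ≤ (p:ℝ) * ((1 + u) ^ p * Real.exp (-u)) := by
      rw [abs_of_nonneg (by positivity), ← mul_assoc]
      gcongr
    have h2 : |u ^ p * (Real.exp (-(a:ℝ) * u) * (-(a:ℝ) * 1))| ≤ (a:ℝ) * ((1 + u) ^ p * Real.exp (-u)) := by
      rw [show u ^ p * (Real.exp (-(a:ℝ) * u) * (-(a:ℝ) * 1)) = -((a:ℝ) * (u ^ p * Real.exp (-(a:ℝ) * u))) by ring,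
        abs_neg, abs_of_nonneg (by positivity)]
      gcongr
    calc |_ + _| ≤ _ + _ := abs_add_le _ _
      _ ≤ (p:ℝ) * ((1 + u) ^ p * Real.exp (-u)) + (a:ℝ) * ((1 + u) ^ p * Real.exp (-u)) := add_le_add h1 h2
      _ = ((p:ℝ) + a) * ((1 + u) ^ p * Real.exp (-u)) := by ring
  have hN : |Nf a p u| ≤ (1 + u) ^ p * Real.exp (-u) := by
    unfold Nf; rw [abs_of_nonneg (by positivity)]; gcongr
  have hD' : |Df' q u| ≤ (q:ℝ) * 2 ^ q := by
    unfold Df'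
    rw [show (q:ℝ) * (1 + Real.exp (-u)) ^ (q - 1) * (Real.exp (-u) * -1)
        = -((q:ℝ) * (1 + Real.exp (-u)) ^ (q - 1) * Real.exp (-u)) by ring,
      abs_neg, abs_of_nonneg (by positivity)]
    have hq1 : (1 + Real.exp (-u)) ^ (q - 1) ≤ 2 ^ (q - 1) :=
      pow_le_pow_left₀ (by positivity) (by linarith) _
    have h2q : (2:ℝ) ^ (q - 1) ≤ 2 ^ q := pow_le_pow_right₀ one_le_two (Nat.sub_le q 1)
    calc (q:ℝ) * (1 + Real.exp (-u)) ^ (q - 1) * Real.exp (-u)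
        ≤ (q:ℝ) * 2 ^ q * 1 := by gcongr; exact hq1.trans h2q
      _ = (q:ℝ) * 2 ^ q := by ring
  have hD2 : (1:ℝ) ≤ (Df q u) ^ 2 := by nlinarith
  unfold Kc
  calc |Ff' a p q u| ≤ |Nf' a p u * Df q u - Nf a p u * Df' q u| := by
        unfold Ff'
        rw [abs_div, abs_of_pos (by positivity : (0:ℝ) < (Df q u) ^ 2)]
        exact div_le_self (abs_nonneg _) hD2
    _ ≤ |Nf' a p u| * Df q u + |Nf a p u| * |Df' q u| := by
        refine le_trans (abs_sub _ _) ?_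
        rw [abs_mul, abs_mul, abs_of_pos (Df_pos q u)]
    _ ≤ (((p:ℝ) + a) * ((1 + u) ^ p * Real.exp (-u))) * 2 ^ q
        + ((1 + u) ^ p * Real.exp (-u)) * ((q:ℝ) * 2 ^ q) := by
        exact add_le_add (mul_le_mul hN' hDle (Df_pos q u).le (by positivity))
          (mul_le_mul hN hD' (abs_nonneg _) (by positivity))
    _ = 2 ^ q * ((p:ℝ) + a + q) * ((1 + u) ^ p * Real.exp (-u)) := by ring
    _ ≤ 2 ^ q * ((p:ℝ) + a + q) * (Pc p * Real.exp (-(1/2) * u)) := by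
        exact mul_le_mul_of_nonneg_left (one_add_pow_mul_exp_le p hu) (by positivity)
    _ = (2 ^ q * ((p:ℝ) + a + q) * Pc p) * Real.exp (-(1/2) * u) := by ring

lemma Ff_diff_le (a p q : ℕ) (ha : 1 ≤ a) {x y : ℝ} (hx : 0 ≤ x) (hxy : x ≤ y) :
    |Ff a p q y - Ff a p q x| ≤ ∫ t in x..y, Kc a p q * Real.exp (-(1/2) * t) := by
  have hftc : ∫ t in x..y, Ff' a p q t = Ff a p q y - Ff a p q x :=
    intervalIntegral.integral_eq_sub_of_hasDerivAt (fun t _ => hasDerivAt_Ff a p q t)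
      ((cont_Ff' a p q).intervalIntegrable x y)
  rw [← hftc]
  have h1 : |∫ t in x..y, Ff' a p q t| ≤ ∫ t in x..y, |Ff' a p q t| := by
    simpa [Real.norm_eq_abs] using intervalIntegral.norm_integral_le_integral_norm (f := Ff' a p q) (μ := MeasureTheory.volume) (a := x) (b := y) hxy
  refine h1.trans ?_
  apply intervalIntegral.integral_mono_on hxy ((cont_Ff' a p q).abs.intervalIntegrable x y)
    (Continuous.intervalIntegrable (by fun_prop) x y)
  intro t ht
  exact Ff'_bound a p q ha (hx.trans ht.1)

/-- Euler–Maclaurin asymptotics: for integers `a, p, q ≥ 1`, as `r → 0⁺`,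
`∑_{k≥1} k^p e^{−akr}/(1+e^{−kr})^q = (1/r^{p+1}) ∫₀^∞ u^p e^{−au}/(1+e^{−u})^q du + O(1/r^p)`.
(The `k = 0` term of the sum vanishes since `p ≥ 1`.) -/
theorem sum_kpow_exp_asymptotic (a p q : ℕ) (ha : 1 ≤ a) (hp : 1 ≤ p) (hq : 1 ≤ q) :
    ∃ C > (0 : ℝ), ∃ r₀ > (0 : ℝ), ∀ r ∈ Set.Ioo (0 : ℝ) r₀,
      |(∑' k : ℕ, (k : ℝ) ^ p * Real.exp (-(a : ℝ) * k * r) /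
            (1 + Real.exp (-(k : ℝ) * r)) ^ q) -
          (1 / r ^ (p + 1)) *
            ∫ u in Set.Ioi (0 : ℝ), u ^ p * Real.exp (-(a : ℝ) * u) /
              (1 + Real.exp (-u)) ^ q| ≤ C / r ^ p := by
  set K : ℝ := Kc a p q with hK
  set J : ℝ := ∫ x in Set.Ioi (0:ℝ), K * Real.exp (-(1/2) * x) with hJ
  have hJ0 : 0 ≤ J := setIntegral_nonneg measurableSet_Ioi
    (fun x _ => by
      have hK0 : 0 < K := by
        rw [hK]; unfold Kc
        have := Pc_pos p
        have ha' : (1:ℝ) ≤ (a:ℝ) := by exact_mod_cast ha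
        positivity
      positivity)
  refine ⟨J + 1, by linarith, 1, one_pos, ?_⟩
  rintro r ⟨hr, hr1⟩
  have hKint : IntegrableOn (fun t : ℝ => K * Real.exp (-(1/2) * t)) (Set.Ioi 0) :=
    (exp_neg_integrableOn_Ioi 0 (by norm_num : (0:ℝ) < 1/2)).const_mul K
  have hfint : IntegrableOn (Ff a p q) (Set.Ioi 0) := by
    apply Integrable.mono' ((exp_neg_integrableOn_Ioi 0 (by norm_num : (0:ℝ) < 1/2)).const_mul (Pc p))
    · exact (cont_Ff a p q).aestronglyMeasurable
    · filter_upwards [ae_restrict_mem measurableSet_Ioi] with x hx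
      rw [Real.norm_eq_abs, abs_of_nonneg (Ff_nonneg a p q hx.le)]
      exact Ff_le a p q ha hx.le
  -- the partition
  set s : ℕ → Set ℝ := fun k => Set.Ioc ((k:ℝ)*r) (((k:ℝ)+1)*r) with hs
  have hsm : ∀ k, MeasurableSet (s k) := fun k => measurableSet_Ioc
  have hssub : ∀ k, s k ⊆ Set.Ioi 0 := by
    intro k x hx
    have h0 : (0:ℝ) ≤ (k:ℝ)*r := by positivity
    exact lt_of_le_of_lt h0 hx.1
  have hUnion : (⋃ k, s k) = Set.Ioi 0 := by
    ext x
    simp only [hs, Set.mem_iUnion, Set.mem_Ioc, Set.mem_Ioi]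
    constructor
    · rintro ⟨k, h1, h2⟩
      have h0 : (0:ℝ) ≤ (k:ℝ)*r := by positivity
      linarith
    · intro hx
      have hxr : 0 < x / r := div_pos hx hr
      set n := ⌈x / r⌉₊ with hn
      have hn1 : 1 ≤ n := Nat.one_le_ceil_iff.mpr hxr
      refine ⟨n - 1, ?_, ?_⟩
      · have hlt : ((n - 1 : ℕ) : ℝ) < x / r := Nat.lt_ceil.mp (by omega)
        calc ((n - 1 : ℕ) : ℝ) * r < (x / r) * r := by gcongr
          _ = x := by field_simp
      · have hle : x / r ≤ (n : ℝ) := Nat.le_ceil _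
        have hcast : ((n - 1 : ℕ) : ℝ) + 1 = (n : ℝ) := by
          rw [Nat.cast_sub hn1]; ring
        rw [hcast]
        calc x = (x / r) * r := by field_simp
          _ ≤ (n : ℝ) * r := by gcongr
  have hdisj : Pairwise (Function.onFun Disjoint s) := by
    have key : ∀ i j : ℕ, i < j → Disjoint (s i) (s j) := by
      intro i j h
      apply Set.Ioc_disjoint_Ioc.mpr
      have hij : ((i:ℝ) + 1) ≤ (j:ℝ) := by exact_mod_cast h
      calc min (((i:ℝ)+1)*r) (((j:ℝ)+1)*r) ≤ ((i:ℝ)+1)*r := min_le_left _ _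
        _ ≤ (j:ℝ)*r := by gcongr
        _ ≤ max ((i:ℝ)*r) ((j:ℝ)*r) := le_max_right _ _
    intro i j hij
    rcases hij.lt_or_gt with h | h
    · exact key i j h
    · exact (key j i h).symm
  have hIsum : HasSum (fun k => ∫ x in s k, Ff a p q x) (∫ x in Set.Ioi (0:ℝ), Ff a p q x) := by
    have := hasSum_integral_iUnion hsm hdisj (hUnion ▸ hfint)
    rwa [hUnion] at this
  have hJsum : HasSum (fun k => ∫ x in s k, K * Real.exp (-(1/2) * x)) J := by
    have := hasSum_integral_iUnion hsm hdisj (hUnion ▸ hKint)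
    rwa [hUnion] at this
  set g : ℕ → ℝ := fun k => Ff a p q (((k:ℝ)+1)*r) with hg
  -- per-interval estimate
  have hk : ∀ k : ℕ, |r * g k - ∫ x in s k, Ff a p q x|
      ≤ r * ∫ x in s k, K * Real.exp (-(1/2) * x) := by
    intro k
    have hle : (k:ℝ)*r ≤ ((k:ℝ)+1)*r := by nlinarith
    have hvol : MeasureTheory.volume (s k) = ENNReal.ofReal r := by
      rw [hs]
      simp only [Real.volume_Ioc]
      congr 1
      ring
    have hvolfin : MeasureTheory.volume (s k) < ⊤ := by rw [hvol]; exact ENNReal.ofReal_lt_top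
    have hfik : IntegrableOn (Ff a p q) (s k) := hfint.mono_set (hssub k)
    have hcik : IntegrableOn (fun _ : ℝ => g k) (s k) :=
      integrableOn_const hvolfin.ne
    have hBk : ∀ x ∈ s k, ‖g k - Ff a p q x‖ ≤ ∫ t in s k, K * Real.exp (-(1/2) * t) := by
      intro x hx
      have hx0 : (0:ℝ) ≤ x := ((hssub k) hx).le
      rw [Real.norm_eq_abs]
      have h1 : |g k - Ff a p q x| ≤ ∫ t in x..(((k:ℝ)+1)*r), K * Real.exp (-(1/2) * t) :=
        Ff_diff_le a p q ha hx0 hx.2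
      refine h1.trans ?_
      have h2 : (∫ t in x..(((k:ℝ)+1)*r), K * Real.exp (-(1/2) * t))
          ≤ ∫ t in ((k:ℝ)*r)..(((k:ℝ)+1)*r), K * Real.exp (-(1/2) * t) := by
        apply intervalIntegral.integral_mono_interval hx.1.le hx.2 le_rfl
        · filter_upwards with t
          have hK0 : 0 < K := by
            rw [hK]; unfold Kc
            have := Pc_pos p
            have ha' : (1:ℝ) ≤ (a:ℝ) := by exact_mod_cast ha
            positivity
          positivity
        · exact Continuous.intervalIntegrable (by fun_prop) _ _
      refine h2.trans ?_
      rw [intervalIntegral.integral_of_le hle]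
    have hsub : (∫ x in s k, (g k - Ff a p q x)) = r * g k - ∫ x in s k, Ff a p q x := by
      rw [integral_sub hcik hfik, setIntegral_const, measureReal_def, hvol, ENNReal.toReal_ofReal hr.le,
        smul_eq_mul]
    rw [← hsub]
    have hmeas : AEStronglyMeasurable (fun x : ℝ => g k - Ff a p q x)
        (MeasureTheory.volume.restrict (s k)) :=
      (continuous_const.sub (cont_Ff a p q)).aestronglyMeasurable
    have hb := norm_setIntegral_le_of_norm_le_const (μ := MeasureTheory.volume) hvolfin hBk
    rw [Real.norm_eq_abs] at hb
    refine hb.trans ?_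
    rw [measureReal_def, hvol, ENNReal.toReal_ofReal hr.le, mul_comm]
  -- summability of g
  have hgsum : Summable g := by
    have hE := Real.exp_pos (-(1/2)*r)
    have hE1 : Real.exp (-(1/2)*r) < 1 := by
      rw [Real.exp_lt_one_iff]
      linarith
    have hgeo : Summable (fun k : ℕ => Pc p * Real.exp (-(1/2)*r) ^ k) :=
      (summable_geometric_of_lt_one hE.le hE1).mul_left _
    apply Summable.of_nonneg_of_le (fun k => Ff_nonneg a p q (by positivity))
      (fun k => ?_) hgeo
    calc g k ≤ Pc p * Real.exp (-(1/2) * (((k:ℝ)+1)*r)) := Ff_le a p q ha (by positivity)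
      _ = Pc p * Real.exp (-(1/2)*r) ^ (k+1) := by
          rw [← Real.exp_nat_mul]
          congr 1
          push_cast
          ring
      _ ≤ Pc p * Real.exp (-(1/2)*r) ^ k := by
          have hPp := Pc_pos p
          have hpw : Real.exp (-(1/2)*r) ^ (k+1) ≤ Real.exp (-(1/2)*r) ^ k :=
            pow_le_pow_of_le_one hE.le hE1.le (Nat.le_succ k)
          nlinarith
  have hfull : Summable (fun k : ℕ => Ff a p q ((k:ℝ)*r)) := by
    rw [← summable_nat_add_iff 1]
    exact hgsum.congr (fun k => by norm_num [hg])
  have hSshift : (∑' k : ℕ, Ff a p q ((k:ℝ)*r)) = ∑' k, g k := by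
    rw [Summable.tsum_eq_zero_add hfull]
    have h0 : Ff a p q (((0:ℕ):ℝ) * r) = 0 := by
      simp only [Nat.cast_zero, zero_mul]
      unfold Ff Nf
      rw [zero_pow (by omega), zero_mul, zero_div]
    rw [h0, zero_add]
    apply tsum_congr
    intro k
    congr 1
    push_cast
    ring
  have hLHS : (∑' k : ℕ, (k : ℝ) ^ p * Real.exp (-(a : ℝ) * k * r) /
      (1 + Real.exp (-(k : ℝ) * r)) ^ q) = (∑' k : ℕ, Ff a p q ((k:ℝ)*r)) / r ^ p := by
    rw [← tsum_div_const]
    apply tsum_congr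
    intro k
    have hD := (Df_pos q ((k:ℝ)*r)).ne'
    have hr' : r ≠ 0 := hr.ne'
    unfold Ff Nf Df
    rw [mul_pow]
    have harg1 : -(a:ℝ) * ((k:ℝ)*r) = -(a:ℝ) * k * r := by ring
    have harg2 : -((k:ℝ)*r) = -(k:ℝ) * r := by ring
    rw [harg1, harg2]
    field_simp
  have hmain : |r * (∑' k, g k) - ∫ x in Set.Ioi (0:ℝ), Ff a p q x| ≤ r * J := by
    rw [← hIsum.tsum_eq, ← tsum_mul_left, ← Summable.tsum_sub (hgsum.mul_left r) hIsum.summable]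
    have hbs : HasSum (fun n => r * ∫ x in s n, K * Real.exp (-(1/2) * x)) (r * J) :=
      hJsum.mul_left r
    have hb := tsum_of_norm_bounded hbs (fun n => by rw [Real.norm_eq_abs]; exact hk n)
    rwa [Real.norm_eq_abs] at hb
  have hIeq : (∫ u in Set.Ioi (0:ℝ), u ^ p * Real.exp (-(a:ℝ) * u) /
      (1 + Real.exp (-u)) ^ q) = ∫ x in Set.Ioi (0:ℝ), Ff a p q x := rfl
  rw [hLHS, hSshift, hIeq]
  set I' : ℝ := ∫ x in Set.Ioi (0:ℝ), Ff a p q x with hI'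
  have hrp : (0:ℝ) < r ^ p := pow_pos hr p
  have hrp1 : (0:ℝ) < r ^ (p+1) := pow_pos hr _
  have heq : (∑' k, g k) / r ^ p - (1 / r ^ (p+1)) * I'
      = (r * (∑' k, g k) - I') / r ^ (p+1) := by
    rw [pow_succ]
    field_simp
  rw [heq, abs_div, abs_of_pos hrp1]
  calc |r * (∑' k, g k) - I'| / r ^ (p+1) ≤ (r*J) / r ^ (p+1) := by gcongr
    _ = J / r ^ p := by
        rw [pow_succ]
        field_simp
    _ ≤ (J+1) / r ^ p := by gcongr; linarith
end

section
/- Let m(t) = ∑_{k=1}^{∞} k tᵏ/(1+tᵏ) for t ∈ (0,1). Then, as r → 0⁺, m(e^{−r}) = π²/(12 r²) + O(1/r). -/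
open Filter Topology Real

lemma sinh_sub_le {y : ℝ} (h0 : 0 ≤ y) (h1 : y ≤ 1) : Real.sinh y - y ≤ 2/9 * y^3 := by
  have hb1 := Real.exp_bound (x := y) (by rwa [abs_of_nonneg h0]) (n := 3) (by norm_num)
  have hb2 := Real.exp_bound (x := -y) (by rwa [abs_neg, abs_of_nonneg h0]) (n := 3) (by norm_num)
  simp only [Finset.sum_range_succ, Finset.sum_range_zero, abs_neg, abs_of_nonneg h0] at hb1 hb2
  norm_num [Nat.factorial] at hb1 hb2
  rw [Real.sinh_eq]
  rw [abs_sub_le_iff] at hb1 hb2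
  nlinarith [hb1.1, hb1.2, hb2.1, hb2.2]

lemma one_sub_exp_neg (x : ℝ) :
    1 - Real.exp (-x) = Real.exp (-(x/2)) * (2 * Real.sinh (x/2)) := by
  rw [Real.sinh_eq]
  have h1 : Real.exp (-(x/2)) * Real.exp (x/2) = 1 := by rw [← Real.exp_add]; simp
  have h2 : Real.exp (-(x/2)) * Real.exp (-(x/2)) = Real.exp (-x) := by
    rw [← Real.exp_add]; ring_nf
  nlinarith [h1, h2]

lemma E_eq (x : ℝ) (hx : 0 < x) :
    Real.exp (-x) / (1 - Real.exp (-x))^2 = 1 / (4 * Real.sinh (x/2)^2) := by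
  have hs : 0 < Real.sinh (x/2) := by
    rw [Real.sinh_pos_iff]; linarith
  have he : 0 < Real.exp (-x) := Real.exp_pos _
  have h2 : Real.exp (-(x/2)) ^ 2 = Real.exp (-x) := by
    rw [sq, ← Real.exp_add]; ring_nf
  rw [one_sub_exp_neg, mul_pow, h2, mul_pow]
  field_simp
  ring


/-- g(x) := 1/x² − e^{−x}/(1−e^{−x})² is nonnegative. -/
lemma g_nonneg {x : ℝ} (hx : 0 < x) :
    Real.exp (-x) / (1 - Real.exp (-x))^2 ≤ 1 / x^2 := by
  rw [E_eq x hx]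
  have hs : x/2 < Real.sinh (x/2) := Real.self_lt_sinh_iff.2 (by linarith)
  have hx2 : (0:ℝ) < x^2 := by positivity
  rw [div_le_div_iff₀ (by nlinarith) hx2]
  nlinarith

/-- g(x) ≤ (5/4)/(1+x²). -/
lemma g_le {x : ℝ} (hx : 0 < x) :
    1 / x^2 - Real.exp (-x) / (1 - Real.exp (-x))^2 ≤ (5/4) / (1 + x^2) := by
  rcases le_or_gt x 2 with h2 | h2
  · -- small x : bound by 1/9 ≤ (5/4)/(1+x²)
    rw [E_eq x hx]
    set y := x/2 with hy
    have hy0 : 0 < y := by positivity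
    have hy1 : y ≤ 1 := by rw [hy]; linarith
    set s := Real.sinh y with hsdef
    have hs : y < s := Real.self_lt_sinh_iff.2 hy0
    have hsy : s - y ≤ 2/9 * y^3 := sinh_sub_le hy0.le hy1
    have key : 1 / x^2 - 1 / (4*s^2) ≤ 1/9 := by
      have h1 : 1 / x^2 - 1 / (4*s^2) = (4*s^2 - x^2) / (x^2 * (4*s^2)) := by
        rw [div_sub_div _ _ (by positivity) (by have := lt_trans hy0 hs; positivity)]
        ring
      rw [h1, div_le_iff₀ (by positivity)]
      have hx2y : x = 2*y := by rw [hy]; ring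
      rw [hx2y]
      have h3 : (s-y)*(s+y) ≤ (2/9*y^3)*(2*s) :=
        mul_le_mul hsy (by linarith) (by linarith) (by positivity)
      have hspos : 0 < s := lt_trans hy0 hs
      have h4 : y^3*s ≤ y^2*s^2 := by
        nlinarith [mul_nonneg (mul_nonneg (mul_nonneg hy0.le hy0.le) hspos.le)
          (sub_nonneg.2 hs.le)]
      nlinarith [h3, h4]
    have : (1:ℝ)/9 ≤ (5/4)/(1+x^2) := by
      rw [div_le_div_iff₀ (by norm_num) (by positivity)]
      nlinarith
    linarith
  · -- large x : LHS ≤ 1/x² ≤ (5/4)/(1+x²)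
    have hE : 0 ≤ Real.exp (-x) / (1 - Real.exp (-x))^2 := by positivity
    have : 1 / x^2 ≤ (5/4)/(1+x^2) := by
      rw [div_le_div_iff₀ (by positivity) (by positivity)]
      nlinarith
    linarith

lemma arctan_lb {a b : ℝ} (ha : 0 ≤ a) (hab : a ≤ b) :
    (b - a) / (1 + b^2) ≤ Real.arctan b - Real.arctan a := by
  rcases eq_or_lt_of_le hab with rfl | h
  · simp
  obtain ⟨c, hc, hc'⟩ := exists_hasDerivAt_eq_slope Real.arctan (fun x => 1/(1+x^2)) h
    (Real.continuous_arctan.continuousOn) (fun x _ => Real.hasDerivAt_arctan x)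
  have hc2 : c^2 ≤ b^2 := by
    have h1 := hc.1
    have h2 := hc.2
    nlinarith [lt_of_le_of_lt ha h1]
  have hfb : Real.arctan b - Real.arctan a = (b - a) * (1/(1+c^2)) := by
    field_simp at hc' ⊢
    linarith [hc']
  rw [hfb, mul_one_div]
  gcongr

lemma sum_range_bound {r : ℝ} (hr : 0 < r) (n : ℕ) :
    ∑ j ∈ Finset.range n, 1/(1+(((j:ℝ)+1)*r)^2) ≤ π/2/r := by
  have key : ∀ m : ℕ, ∑ j ∈ Finset.range m, 1/(1+(((j:ℝ)+1)*r)^2)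
      ≤ Real.arctan ((m:ℝ)*r) / r := by
    intro m
    induction m with
    | zero => simp
    | succ n ih =>
      rw [Finset.sum_range_succ]
      have hstep : 1/(1+(((n:ℝ)+1)*r)^2)
          ≤ (Real.arctan (((n:ℝ)+1)*r) - Real.arctan ((n:ℝ)*r)) / r := by
        have := arctan_lb (a := (n:ℝ)*r) (b := ((n:ℝ)+1)*r)
          (by positivity) (by nlinarith)
        have heq : ((n:ℝ)+1)*r - (n:ℝ)*r = r := by ring
        rw [heq] at this
        rw [le_div_iff₀ hr]
        calc 1/(1+(((n:ℝ)+1)*r)^2) * r = r / (1+(((n:ℝ)+1)*r)^2) := by ring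
          _ ≤ _ := this
      push_cast
      calc _ ≤ Real.arctan ((n:ℝ)*r)/r + (Real.arctan (((n:ℝ)+1)*r) - Real.arctan ((n:ℝ)*r))/r :=
            add_le_add ih hstep
        _ = Real.arctan (((n:ℝ)+1)*r)/r := by ring
  calc ∑ j ∈ Finset.range n, 1/(1+(((j:ℝ)+1)*r)^2) ≤ Real.arctan ((n:ℝ)*r) / r := key n
    _ ≤ π/2/r := by
      gcongr
      exact (Real.arctan_lt_pi_div_two _).le

lemma tsum_one_add_sq_bound {r : ℝ} (hr : 0 < r) :
    ∑' j : ℕ, 1/(1+(((j:ℝ)+1)*r)^2) ≤ π/2/r :=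
  Real.tsum_le_of_sum_range_le (fun n => by positivity) (sum_range_bound hr)

lemma hasSum_basel_succ : HasSum (fun n : ℕ => (1:ℝ) / ((n:ℝ)+1)^2) (π^2/6) := by
  have h0 : HasSum (fun n : ℕ => (1:ℝ) / (n:ℝ)^2) (π^2/6) := hasSum_zeta_two
  have h := (hasSum_nat_add_iff (f := fun n : ℕ => (1:ℝ) / (n:ℝ)^2) 1 (g := π^2/6)).2
    (by simpa using h0)
  have hfun : (fun n : ℕ => (1:ℝ)/((n:ℝ)+1)^2) = (fun n : ℕ => (1:ℝ)/((((n+1):ℕ)):ℝ)^2) := by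
    funext n; push_cast; ring
  rw [hfun]; exact h

lemma hasSum_eta_two : HasSum (fun j : ℕ => (-1:ℝ)^j / ((j:ℝ)+1)^2) (π^2/12) := by
  have h1 := hasSum_basel_succ
  have h2 : HasSum (fun m : ℕ => (2:ℝ) / ((2*(m:ℝ)+1)+1)^2) (π^2/12) := by
    have h := h1.mul_left (1/2)
    have hfun : (fun m : ℕ => (2:ℝ)/((2*(m:ℝ)+1)+1)^2)
        = fun m : ℕ => (1/2) * ((1:ℝ)/((m:ℝ)+1)^2) := by
      funext m; field_simp; ring
    rw [hfun]
    rw [show (π^2/12:ℝ) = 1/2*(π^2/6) by ring]; exact h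
  set F : ℕ → ℝ := fun j => if Odd j then (2:ℝ) / ((j:ℝ)+1)^2 else 0 with hF
  have hFsum : HasSum F (π^2/12) := by
    have hinj : Function.Injective (fun m : ℕ => 2*m+1) := by
      intro a b h; dsimp only at h; omega
    have hsupp : ∀ j ∉ Set.range (fun m : ℕ => 2*m+1), F j = 0 := by
      intro j hj
      simp only [Set.mem_range] at hj
      have hno : ¬ Odd j := by
        intro ⟨m, hm⟩; exact hj ⟨m, hm.symm⟩
      rw [hF]; simp [hno]
    rw [← Function.Injective.hasSum_iff hinj hsupp]
    have hfun2 : (F ∘ fun m : ℕ => 2*m+1) = fun m : ℕ => (2:ℝ)/((2*(m:ℝ)+1)+1)^2 := by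
      funext m
      have hodd : Odd (2*m+1) := ⟨m, rfl⟩
      simp only [Function.comp_apply, hF, if_pos hodd]
      push_cast; ring
    rw [hfun2]; exact h2
  have hfun : (fun j : ℕ => (-1:ℝ)^j/((j:ℝ)+1)^2) = fun j : ℕ => 1/((j:ℝ)+1)^2 - F j := by
    funext j
    rcases Nat.even_or_odd j with he | ho
    · have hno : ¬ Odd j := by simp [Nat.not_odd_iff_even, he]
      rw [hF]; simp only [if_neg hno, he.neg_one_pow]; ring
    · rw [hF]; simp only [if_pos ho, ho.neg_one_pow]; ring
  rw [hfun]
  rw [show (π^2/12:ℝ) = π^2/6 - π^2/12 by ring]; exact h1.sub hFsum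

lemma key_identity {t : ℝ} (ht0 : 0 < t) (ht1 : t < 1) :
    ∑' k : ℕ, (k:ℝ) * t^k / (1 + t^k)
      = ∑' j : ℕ, (-1:ℝ)^j * (t^(j+1) / (1 - t^(j+1))^2) := by
  set f : ℕ → ℕ → ℝ := fun k j => (k:ℝ) * t^k * (-t^k)^j with hf
  have htk : ∀ k : ℕ, 1 ≤ k → t^k < 1 := fun k hk => pow_lt_one₀ ht0.le ht1 (by omega)
  have htk0 : ∀ k : ℕ, 0 < t^k := fun k => pow_pos ht0 k
  -- row sums
  have hrow : ∀ k : ℕ, HasSum (f k) ((k:ℝ) * t^k / (1 + t^k)) := by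
    intro k
    rcases Nat.eq_zero_or_pos k with rfl | hk
    · have : f 0 = fun _ => 0 := by funext j; simp [hf]
      rw [this]
      simpa using (hasSum_zero : HasSum (fun _ : ℕ => (0:ℝ)) 0)
    · have hnorm : ‖-t^k‖ < 1 := by
        rw [norm_neg, Real.norm_eq_abs, abs_of_pos (htk0 k)]
        exact htk k hk
      have h := (hasSum_geometric_of_norm_lt_one hnorm).mul_left ((k:ℝ) * t^k)
      rw [show (k:ℝ)*t^k/(1+t^k) = (k:ℝ)*t^k*(1 - -t^k)⁻¹ by rw [sub_neg_eq_add, div_eq_mul_inv]]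
      exact h
  -- column sums
  have hcol : ∀ j : ℕ, HasSum (fun k => f k j)
      ((-1:ℝ)^j * (t^(j+1) / (1 - t^(j+1))^2)) := by
    intro j
    have hnorm : ‖t^(j+1)‖ < 1 := by
      rw [Real.norm_eq_abs, abs_of_pos (htk0 _)]
      exact htk _ (by omega)
    have h := (hasSum_coe_mul_geometric_of_norm_lt_one hnorm).mul_left ((-1:ℝ)^j)
    suffices hfun : (fun k => f k j) = fun k : ℕ => (-1:ℝ)^j * ((k:ℝ) * (t^(j+1))^k) by
      rw [hfun]; exact h
    funext k
    show (k:ℝ) * t^k * (-t^k)^j = (-1:ℝ)^j * ((k:ℝ) * (t^(j+1))^k)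
    rw [neg_pow]
    have hp : (t^(j+1))^k = t^k * (t^k)^j := by
      rw [← pow_mul, ← pow_mul]
      rw [← pow_add]
      congr 1
      ring
    rw [hp]
    ring
  -- summability of the double sum
  have habs : Summable (fun p : ℕ × ℕ => |f p.1 p.2|) := by
    rw [summable_prod_of_nonneg (fun p => abs_nonneg _)]
    constructor
    · intro k
      apply Summable.abs
      exact (hrow k).summable
    · -- Summable fun k => ∑' j, |f k j|
      refine Summable.of_nonneg_of_le (f := fun k : ℕ => (k:ℝ) * t^k * (1-t)⁻¹)
        (fun k => tsum_nonneg (fun j => abs_nonneg _)) ?_ ?_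
      · intro k
        show (∑' j : ℕ, |f k j|) ≤ (k:ℝ) * t^k * (1-t)⁻¹
        rcases Nat.eq_zero_or_pos k with rfl | hk
        · have : (fun j => |f 0 j|) = fun _ => 0 := by funext j; simp [hf]
          rw [this, tsum_zero]
          simp
        · have heq : ∀ j : ℕ, |f k j| = (k:ℝ) * t^k * (t^k)^j := by
            intro j
            rw [hf]
            simp [abs_mul, abs_pow, abs_neg, abs_of_pos ht0]
          have hsum : HasSum (fun j => |f k j|) ((k:ℝ) * t^k * (1 - t^k)⁻¹) := by
            have := (hasSum_geometric_of_norm_lt_one (ξ := t^k)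
              (by rw [Real.norm_eq_abs, abs_of_pos (htk0 k)]; exact htk k hk)).mul_left ((k:ℝ)*t^k)
            rw [show (fun j => |f k j|) = fun j => (k:ℝ)*t^k*(t^k)^j from funext heq]
            exact this
          rw [hsum.tsum_eq]
          have h1 : (1:ℝ) - t^k ≥ 1 - t := by
            have : t^k ≤ t := by
              calc t^k ≤ t^1 := pow_le_pow_of_le_one ht0.le ht1.le (by omega)
                _ = t := pow_one t
            linarith
          gcongr
          all_goals first | linarith | positivity
      · apply Summable.mul_right
        exact (hasSum_coe_mul_geometric_of_norm_lt_one
          (by rw [Real.norm_eq_abs, abs_of_pos ht0]; exact ht1)).summable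
  have hsummable : Summable (Function.uncurry f) := by
    apply Summable.of_abs
    exact habs
  calc ∑' k : ℕ, (k:ℝ) * t^k / (1 + t^k) = ∑' (k) (j), f k j := by
        congr 1; funext k; exact (hrow k).tsum_eq.symm
    _ = ∑' (j) (k), f k j := (Summable.tsum_comm hsummable).symm
    _ = ∑' j : ℕ, (-1:ℝ)^j * (t^(j+1) / (1 - t^(j+1))^2) := by
        congr 1; funext j; exact (hcol j).tsum_eq

/-- Mean asymptotics for partitions into distinct parts: with
`m(t) = ∑_{k≥1} k tᵏ/(1+tᵏ)`, one has `m(e^{−r}) = π²/(12r²) + O(1/r)` as `r → 0⁺`.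
(The `k = 0` term of the sum vanishes.) -/
theorem mean_distinct_partitions_asymptotic :
    ∃ C > (0 : ℝ), ∃ r₀ > (0 : ℝ), ∀ r ∈ Set.Ioo (0 : ℝ) r₀,
      |(∑' k : ℕ, (k : ℝ) * Real.exp (-r) ^ k / (1 + Real.exp (-r) ^ k)) -
          π ^ 2 / (12 * r ^ 2)| ≤ C / r := by
  refine ⟨2, by norm_num, 1, by norm_num, ?_⟩
  rintro r ⟨hr0, hr1⟩
  set t : ℝ := Real.exp (-r) with htdef
  have ht0 : 0 < t := Real.exp_pos _
  have ht1 : t < 1 := Real.exp_lt_one_iff.2 (by linarith)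
  -- x j = (j+1) r
  set x : ℕ → ℝ := fun j => ((j:ℝ)+1)*r with hx
  have hxpos : ∀ j : ℕ, 0 < x j := fun j => by
    have : (0:ℝ) < (j:ℝ)+1 := by positivity
    exact mul_pos this hr0
  have hte : ∀ j : ℕ, t^(j+1) = Real.exp (-(x j)) := by
    intro j
    rw [htdef, ← Real.exp_nat_mul]
    congr 1
    push_cast [hx]
    ring
  set E : ℕ → ℝ := fun j => Real.exp (-(x j)) / (1 - Real.exp (-(x j)))^2 with hE
  set A : ℕ → ℝ := fun j => (-1:ℝ)^j * (t^(j+1) / (1 - t^(j+1))^2) with hA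
  set B : ℕ → ℝ := fun j => (-1:ℝ)^j * (1/(x j)^2) with hB
  have hAE : ∀ j, A j = (-1:ℝ)^j * E j := by
    intro j; simp only [hA, hE, hte j]
  have hEpos : ∀ j, 0 ≤ E j := by
    intro j
    rw [hE]
    have h1 : Real.exp (-(x j)) < 1 := Real.exp_lt_one_iff.2 (by linarith [hxpos j])
    positivity
  -- HasSum B (π²/(12 r²))
  have hBsum : HasSum B (π^2/(12*r^2)) := by
    have h := hasSum_eta_two.mul_left (1/r^2)
    have hfun : B = fun j : ℕ => (1/r^2) * ((-1:ℝ)^j / ((j:ℝ)+1)^2) := by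
      funext j
      simp only [hB, hx]
      field_simp
    rw [hfun]
    rw [show π^2/(12*r^2) = 1/r^2*(π^2/12) by ring]; exact h
  -- Summable A
  have hAsum : Summable A := by
    apply Summable.of_abs
    refine Summable.of_nonneg_of_le (fun j => abs_nonneg _)
      (f := fun j : ℕ => t^(j+1) * ((1-t)^2)⁻¹) ?_ ?_
    · intro j
      have h1 : |A j| = t^(j+1) / (1 - t^(j+1))^2 := by
        rw [hA, abs_mul, abs_pow, abs_neg, abs_one, one_pow, one_mul]
        rw [abs_of_nonneg]
        have htj1 : t^(j+1) < 1 := pow_lt_one₀ ht0.le ht1 (by omega)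
        have := pow_pos ht0 (j+1)
        positivity
      rw [h1, div_eq_mul_inv]
      have htj1 : t^(j+1) < 1 := pow_lt_one₀ ht0.le ht1 (by omega)
      have htj : t^(j+1) ≤ t := by
        calc t^(j+1) ≤ t^1 := pow_le_pow_of_le_one ht0.le ht1.le (by omega)
          _ = t := pow_one t
      have hle2 : (1-t)^2 ≤ (1-t^(j+1))^2 := by nlinarith
      have hpos2 : (0:ℝ) < (1-t)^2 := by nlinarith
      exact mul_le_mul_of_nonneg_left (inv_anti₀ hpos2 hle2) (pow_pos ht0 (j+1)).le
    · apply Summable.mul_right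
      have : Summable (fun j : ℕ => t^j) := summable_geometric_of_lt_one ht0.le ht1
      exact (summable_nat_add_iff 1).2 this
  -- Summable (1/x j ^2) and E
  have hS1 : Summable (fun j : ℕ => 1/(x j)^2) := by
    have h := hasSum_basel_succ.mul_left (1/r^2)
    apply h.summable.congr
    intro j
    simp only [hx]
    field_simp
  have hS2 : Summable E := by
    apply hAsum.abs.congr
    intro j
    rw [hAE j, abs_mul, abs_pow, abs_neg, abs_one, one_pow, one_mul, abs_of_nonneg (hEpos j)]
  have hSg : Summable (fun j : ℕ => 1/(x j)^2 - E j) := hS1.sub hS2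
  -- the difference
  have hdiff : (∑' k : ℕ, (k:ℝ) * t^k / (1 + t^k)) - π^2/(12*r^2)
      = ∑' j : ℕ, (A j - B j) := by
    rw [key_identity ht0 ht1, ← hBsum.tsum_eq]
    exact (Summable.tsum_sub hAsum hBsum.summable).symm
  rw [hdiff]
  have habs : ∀ j, |A j - B j| = 1/(x j)^2 - E j := by
    intro j
    rw [hAE, hB]
    have : (-1:ℝ)^j * E j - (-1:ℝ)^j * (1/(x j)^2) = (-1:ℝ)^j * (E j - 1/(x j)^2) := by ring
    rw [this, abs_mul, abs_pow, abs_neg, abs_one, one_pow, one_mul, abs_sub_comm,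
      abs_of_nonneg (sub_nonneg.2 (g_nonneg (hxpos j)))]
  have hsummand : Summable (fun j : ℕ => |A j - B j|) := by
    apply hSg.congr; intro j; exact (habs j).symm
  calc |∑' j : ℕ, (A j - B j)| ≤ ∑' j : ℕ, |A j - B j| := by
        have := norm_tsum_le_tsum_norm (f := fun j : ℕ => A j - B j)
          (by simpa [Real.norm_eq_abs] using hsummand)
        simpa [Real.norm_eq_abs] using this
    _ = ∑' j : ℕ, (1/(x j)^2 - E j) := by
        congr 1; funext j; exact habs j
    _ ≤ ∑' j : ℕ, (5/4) * (1/(1+(x j)^2)) := by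
        refine Summable.tsum_le_tsum ?_ hSg ?_
        · intro j
          have h5 := g_le (hxpos j)
          have hEj : E j = Real.exp (-(x j)) / (1 - Real.exp (-(x j)))^2 := by simp only [hE]
          rw [hEj]
          calc 1/(x j)^2 - Real.exp (-(x j)) / (1 - Real.exp (-(x j)))^2
              ≤ (5/4)/(1+(x j)^2) := h5
            _ = (5/4) * (1/(1+(x j)^2)) := by ring
        · apply Summable.mul_left
          refine Summable.of_nonneg_of_le (fun j => by positivity) ?_ hS1
          intro j
          exact one_div_le_one_div_of_le (pow_pos (hxpos j) 2) (by linarith)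
    _ = (5/4) * ∑' j : ℕ, 1/(1+(x j)^2) := by
        rw [tsum_mul_left]
    _ ≤ (5/4) * (π/2/r) := by
        gcongr
        exact tsum_one_add_sq_bound hr0
    _ ≤ 2 / r := by
        have heq : 5/4 * (π/2/r) = (5*π/8)/r := by ring
        rw [heq]
        gcongr
        nlinarith [Real.pi_lt_d2]
end

section
/- Let σ²(t) = ∑_{k=1}^{∞} k² tᵏ/(1+tᵏ)² for t ∈ (0,1). Then σ²(e^{−r}) ∼ π²/(6 r³) as r → 0⁺, i.e. the ratio of the two sides tends to 1. -/
open Filter Topology Real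

lemma hasSum_sq_mul_geom {x : ℝ} (h0 : 0 ≤ x) (h1 : x < 1) :
    HasSum (fun n : ℕ => (n : ℝ) ^ 2 * x ^ n) (x * (1 + x) / (1 - x) ^ 3) := by
  have hx : ‖x‖ < 1 := by rwa [Real.norm_eq_abs, abs_of_nonneg h0]
  have hne : (1 : ℝ) - x ≠ 0 := by nlinarith
  have h2 := hasSum_choose_mul_geometric_of_norm_lt_one 2 hx
  have hA := hasSum_choose_mul_geometric_of_norm_lt_one 1 hx
  have hB := hasSum_choose_mul_geometric_of_norm_lt_one 0 hx
  have h := ((h2.mul_left 2).sub (hA.mul_left 3)).add hB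
  convert h using 1
  · rfl
  · funext n
    have : ((n + 2).choose 2 : ℝ) = (n + 2) * (n + 1) / 2 := by
      rw [Nat.cast_choose_two]; push_cast; ring
    simp [this, Nat.choose_one_right]
    ring
  · field_simp
    ring

lemma hasSum_succ_mul_geom {y : ℝ} (h0 : 0 ≤ y) (h1 : y < 1) :
    HasSum (fun n : ℕ => ((n : ℝ) + 1) * y ^ (n + 1)) (y / (1 - y) ^ 2) := by
  have hy : ‖y‖ < 1 := by rwa [Real.norm_eq_abs, abs_of_nonneg h0]
  have h := hasSum_coe_mul_geometric_of_norm_lt_one hy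
  have h2 : HasSum (fun n : ℕ => ((n + 1 : ℕ) : ℝ) * y ^ (n + 1))
      (y / (1 - y) ^ 2 - ∑ i ∈ Finset.range 1, (i : ℝ) * y ^ i) :=
    (hasSum_nat_add_iff' (f := fun n : ℕ => (n : ℝ) * y ^ n) 1).2 h
  simpa using h2

lemma hrow {t : ℝ} (h0 : 0 < t) (h1 : t < 1) (k : ℕ) :
    HasSum (fun n : ℕ => (k : ℝ) ^ 2 * ((n : ℝ) + 1) * t ^ (k * (n + 1)))
      ((k : ℝ) ^ 2 * t ^ k / (1 - t ^ k) ^ 2) := by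
  cases k with
  | zero => simpa using hasSum_zero
  | succ k =>
    have hy0 : 0 ≤ t ^ (k + 1) := le_of_lt (pow_pos h0 _)
    have hy1 : t ^ (k + 1) < 1 := pow_lt_one₀ h0.le h1 (Nat.succ_ne_zero k)
    have h := (hasSum_succ_mul_geom hy0 hy1).mul_left (((k : ℝ) + 1) ^ 2)
    convert h using 1
    · rfl
    · funext n
      rw [mul_comm (k+1) (n+1), pow_mul]
      push_cast
      ring
    · push_cast
      rw [mul_div_assoc]

lemma hcol {t : ℝ} (h0 : 0 < t) (h1 : t < 1) (n : ℕ) :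
    HasSum (fun k : ℕ => (k : ℝ) ^ 2 * ((n : ℝ) + 1) * t ^ (k * (n + 1)))
      (((n : ℝ) + 1) * (t ^ (n + 1) * (1 + t ^ (n + 1)) / (1 - t ^ (n + 1)) ^ 3)) := by
  have hy0 : 0 ≤ t ^ (n + 1) := le_of_lt (pow_pos h0 _)
  have hy1 : t ^ (n + 1) < 1 := pow_lt_one₀ h0.le h1 (Nat.succ_ne_zero n)
  have h := (hasSum_sq_mul_geom hy0 hy1).mul_left ((n : ℝ) + 1)
  convert h using 1
  rfl
  funext k
  rw [mul_comm k (n+1), pow_mul]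
  ring

lemma summable_S {t : ℝ} (h0 : 0 < t) (h1 : t < 1) :
    Summable (fun k : ℕ => (k : ℝ) ^ 2 * t ^ k / (1 - t ^ k) ^ 2) := by
  have hb : Summable (fun k : ℕ => ((1 : ℝ) / (1 - t) ^ 2) * ((k : ℝ) ^ 2 * t ^ k)) :=
    ((hasSum_sq_mul_geom h0.le h1).summable).mul_left _
  apply hb.of_nonneg_of_le
  · intro k
    apply div_nonneg (by positivity) (by positivity)
  · intro k
    cases k with
    | zero => simp
    | succ k =>
      have htk : t ^ (k + 1) ≤ t := pow_le_of_le_one h0.le h1.le (Nat.succ_ne_zero k)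
      have h2 : (0:ℝ) < (1 - t) ^ 2 := by nlinarith
      have h3 : (1 - t) ^ 2 ≤ (1 - t ^ (k+1)) ^ 2 := by nlinarith [pow_pos h0 (k+1)]
      rw [one_div, mul_comm ((1-t)^2)⁻¹, ← div_eq_mul_inv]
      exact div_le_div_of_nonneg_left (by positivity) h2 h3

lemma S_swap {t : ℝ} (h0 : 0 < t) (h1 : t < 1) :
    (∑' k : ℕ, (k : ℝ) ^ 2 * t ^ k / (1 - t ^ k) ^ 2)
      = ∑' n : ℕ, ((n : ℝ) + 1) * (t ^ (n + 1) * (1 + t ^ (n + 1)) / (1 - t ^ (n + 1)) ^ 3) := by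
  have hFnn : 0 ≤ (fun p : ℕ × ℕ => (p.1 : ℝ) ^ 2 * ((p.2 : ℝ) + 1) * t ^ (p.1 * (p.2 + 1))) :=
    fun p => by positivity
  have hsum : Summable (Function.uncurry
      fun k n : ℕ => (k : ℝ) ^ 2 * ((n : ℝ) + 1) * t ^ (k * (n + 1))) := by
    rw [show (Function.uncurry fun k n : ℕ => (k : ℝ) ^ 2 * ((n : ℝ) + 1) * t ^ (k * (n + 1)))
        = fun p : ℕ × ℕ => (p.1 : ℝ) ^ 2 * ((p.2 : ℝ) + 1) * t ^ (p.1 * (p.2 + 1)) from rfl,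
      summable_prod_of_nonneg hFnn]
    exact ⟨fun k => (hrow h0 h1 k).summable,
      (summable_S h0 h1).congr fun k => ((hrow h0 h1 k).tsum_eq).symm⟩
  calc (∑' k : ℕ, (k : ℝ) ^ 2 * t ^ k / (1 - t ^ k) ^ 2)
      = ∑' (k : ℕ) (n : ℕ), (k : ℝ) ^ 2 * ((n : ℝ) + 1) * t ^ (k * (n + 1)) :=
        tsum_congr fun k => ((hrow h0 h1 k).tsum_eq).symm
    _ = ∑' (n : ℕ) (k : ℕ), (k : ℝ) ^ 2 * ((n : ℝ) + 1) * t ^ (k * (n + 1)) :=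
        (Summable.tsum_comm (f := fun k n : ℕ => (k : ℝ) ^ 2 * ((n : ℝ) + 1) * t ^ (k * (n + 1))) hsum).symm
    _ = _ := tsum_congr fun n => (hcol h0 h1 n).tsum_eq

lemma phi_le {u : ℝ} (hu : 0 < u) :
    u ^ 3 * (exp (-u) * (1 + exp (-u)) / (1 - exp (-u)) ^ 3) ≤ 54 := by
  have hy0 : 0 < exp (-u) := exp_pos _
  have hu1 : (0:ℝ) < 1 + u := by linarith
  have he : 1 + u ≤ exp u := by linarith [add_one_le_exp u]
  have hy_le : exp (-u) ≤ 1 / (1 + u) := by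
    rw [exp_neg, inv_eq_one_div]
    apply div_le_div_of_nonneg_left one_pos.le hu1 he
  have hden : u / (1 + u) ≤ 1 - exp (-u) := by
    have h : 1 - 1 / (1 + u) = u / (1 + u) := by field_simp; ring
    linarith [h]
  have he3 : (1 + u) ^ 3 ≤ 27 * exp u := by
    have h13 : 1 + u ≤ 3 * exp (u / 3) := by
      have := add_one_le_exp (u / 3)
      nlinarith [exp_pos (u/3)]
    have hexp3 : exp (u / 3) ^ 3 = exp u := by
      rw [← Real.exp_nat_mul]; congr 1; push_cast; ring
    calc (1 + u) ^ 3 ≤ (3 * exp (u / 3)) ^ 3 :=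
          pow_le_pow_left₀ (by linarith) h13 3
      _ = 27 * exp u := by rw [mul_pow, hexp3]; norm_num
  have h27 : exp (-u) ≤ 27 / (1 + u) ^ 3 := by
    rw [le_div_iff₀ (by positivity)]
    calc exp (-u) * (1 + u) ^ 3 ≤ exp (-u) * (27 * exp u) := by
          apply mul_le_mul_of_nonneg_left he3 hy0.le
      _ = 27 := by rw [mul_comm 27 (exp u), ← mul_assoc, ← Real.exp_add]; simp
  have hnum : exp (-u) * (1 + exp (-u)) ≤ 54 / (1 + u) ^ 3 := by
    have hy1 : exp (-u) < 1 := exp_lt_one_iff.2 (by linarith)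
    have h2y : exp (-u) * (1 + exp (-u)) ≤ 2 * exp (-u) := by nlinarith
    have : 2 * exp (-u) ≤ 2 * (27 / (1 + u) ^ 3) := by linarith
    calc exp (-u) * (1 + exp (-u)) ≤ 2 * (27 / (1 + u) ^ 3) := by linarith
      _ = 54 / (1 + u) ^ 3 := by ring
  have hdpos : (0:ℝ) < (u / (1 + u)) ^ 3 := by positivity
  have hd3 : (u / (1 + u)) ^ 3 ≤ (1 - exp (-u)) ^ 3 :=
    pow_le_pow_left₀ (by positivity) hden 3
  have key : exp (-u) * (1 + exp (-u)) / (1 - exp (-u)) ^ 3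
      ≤ (54 / (1 + u) ^ 3) / ((u / (1 + u)) ^ 3) :=
    div_le_div₀ (by positivity) hnum hdpos hd3
  have hrhs : (54 / (1 + u) ^ 3) / ((u / (1 + u)) ^ 3) = 54 / u ^ 3 := by
    rw [div_pow]
    field_simp
  calc u ^ 3 * (exp (-u) * (1 + exp (-u)) / (1 - exp (-u)) ^ 3)
      ≤ u ^ 3 * (54 / u ^ 3) := by
        apply mul_le_mul_of_nonneg_left (hrhs ▸ key) (by positivity)
    _ = 54 := by field_simp

lemma tendsto_ratio {c : ℝ} (hc : 0 < c) :
    Tendsto (fun r : ℝ => r / (1 - exp (-(c * r)))) (𝓝[>] 0) (𝓝 (1 / c)) := by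
  have h1 : HasDerivAt (fun x : ℝ => -(c * x)) (-c) 0 := by
    simpa [Pi.neg_def] using ((hasDerivAt_id (0:ℝ)).const_mul c).neg
  have h2 : HasDerivAt (fun x : ℝ => 1 - exp (-(c * x))) c 0 := by
    have := (h1.exp).const_sub 1
    simpa using this
  have h3 : Tendsto (fun r : ℝ => (1 - exp (-(c * r))) / r) (𝓝[>] 0) (𝓝 c) := by
    have := hasDerivAt_iff_tendsto_slope.1 h2
    have h4 := this.mono_left (nhdsWithin_mono 0 (by intro x hx; exact ne_of_gt hx))
    apply h4.congr
    intro r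
    simp [slope_def_field, div_eq_inv_mul]
  have h5 := h3.inv₀ (ne_of_gt hc)
  rw [one_div]
  apply h5.congr
  intro r
  rw [inv_div]

lemma hasSum_inv_sq_succ : HasSum (fun n : ℕ => 1 / ((n : ℝ) + 1) ^ 2) (π ^ 2 / 6) := by
  have h := hasSum_zeta_two
  have h2 := (hasSum_nat_add_iff' (f := fun n : ℕ => 1 / (n : ℝ) ^ 2) 1).2 h
  simp only [Finset.range_one, Finset.sum_singleton, Nat.cast_zero] at h2
  norm_num at h2
  convert h2 using 2
  rfl
  push_cast
  ring

lemma tendsto_S :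
    Tendsto (fun r : ℝ => r ^ 3 * ∑' k : ℕ, (k : ℝ) ^ 2 * exp (-r) ^ k / (1 - exp (-r) ^ k) ^ 2)
      (𝓝[>] 0) (𝓝 (π ^ 2 / 3)) := by
  have hg : HasSum (fun n : ℕ => 2 / ((n : ℝ) + 1) ^ 2) (π ^ 2 / 3) := by
    have h := hasSum_inv_sq_succ.mul_left 2
    rw [show (2:ℝ) * (π ^ 2 / 6) = π ^ 2 / 3 by ring] at h
    simp only [mul_one_div] at h
    exact h
  have hbound : Summable (fun n : ℕ => 54 / ((n : ℝ) + 1) ^ 2) := by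
    have h := hasSum_inv_sq_succ.summable.mul_left 54
    apply h.congr
    intro n
    rw [mul_one_div]
  -- family
  set a : ℝ → ℕ → ℝ := fun r n =>
    r ^ 3 * (((n : ℝ) + 1) *
      (exp (-r) ^ (n + 1) * (1 + exp (-r) ^ (n + 1)) / (1 - exp (-r) ^ (n + 1)) ^ 3)) with ha
  have hexp : ∀ (r : ℝ) (n : ℕ), exp (-r) ^ (n + 1) = exp (-(((n : ℝ) + 1) * r)) := by
    intro r n
    rw [← Real.exp_nat_mul]
    congr 1
    push_cast
    ring
  have hlim : ∀ n : ℕ, Tendsto (a · n) (𝓝[>] 0) (𝓝 (2 / ((n : ℝ) + 1) ^ 2)) := by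
    intro n
    set c : ℝ := (n : ℝ) + 1 with hcdef
    have hc : 0 < c := by positivity
    have T1 : Tendsto (fun r : ℝ => exp (-(c * r))) (𝓝[>] 0) (𝓝 1) := by
      have hcont : Continuous fun r : ℝ => exp (-(c * r)) := by continuity
      exact (hcont.tendsto' 0 1 (by simp)).mono_left nhdsWithin_le_nhds
    have T2 := tendsto_ratio hc
    have T : Tendsto
        (fun r : ℝ => c * (exp (-(c * r)) * (1 + exp (-(c * r)))) * (r / (1 - exp (-(c * r)))) ^ 3)
        (𝓝[>] 0) (𝓝 (c * (1 * (1 + 1)) * (1 / c) ^ 3)) :=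
      (tendsto_const_nhds.mul (T1.mul (tendsto_const_nhds.add T1))).mul (T2.pow 3)
    have hval : c * (1 * (1 + 1)) * (1 / c) ^ 3 = 2 / c ^ 2 := by
      field_simp
      ring
    rw [hval] at T
    apply T.congr'
    filter_upwards [self_mem_nhdsWithin] with r (hr : 0 < r)
    have hy1 : exp (-(c * r)) < 1 := exp_lt_one_iff.2 (by nlinarith)
    have hne : 1 - exp (-(c * r)) ≠ 0 := by linarith
    rw [ha]
    simp only [hexp r n, ← hcdef]
    rw [div_pow]
    field_simp
  have hb : ∀ᶠ r in 𝓝[>] (0 : ℝ), ∀ n : ℕ, ‖a r n‖ ≤ 54 / ((n : ℝ) + 1) ^ 2 := by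
    filter_upwards [self_mem_nhdsWithin] with r (hr : 0 < r)
    intro n
    set c : ℝ := (n : ℝ) + 1 with hcdef
    have hc : 0 < c := by positivity
    have hy1 : exp (-(c * r)) < 1 := exp_lt_one_iff.2 (by nlinarith)
    have hy0 : 0 < exp (-(c * r)) := exp_pos _
    have heq : a r n = ((c * r) ^ 3 *
        (exp (-(c * r)) * (1 + exp (-(c * r))) / (1 - exp (-(c * r))) ^ 3)) / c ^ 2 := by
      rw [ha]
      simp only [hexp r n, ← hcdef]
      have hne : 1 - exp (-(c * r)) ≠ 0 := by linarith
      field_simp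
    have hnn : 0 ≤ a r n := by
      rw [heq]
      apply div_nonneg _ (by positivity)
      apply mul_nonneg (by positivity)
      exact div_nonneg (by positivity) (pow_nonneg (by linarith) 3)
    rw [Real.norm_eq_abs, abs_of_nonneg hnn, heq]
    exact div_le_div_of_nonneg_right (phi_le (by positivity)) (by positivity) |>.trans_eq rfl
  have H := tendsto_tsum_of_dominated_convergence hbound hlim hb
  rw [hg.tsum_eq] at H
  apply H.congr'
  filter_upwards [self_mem_nhdsWithin] with r (hr : 0 < r)
  have h0 : 0 < exp (-r) := exp_pos _
  have h1 : exp (-r) < 1 := exp_lt_one_iff.2 (by linarith)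
  rw [S_swap h0 h1, ← tsum_mul_left]

lemma sigma_eq {t : ℝ} (h0 : 0 < t) (h1 : t < 1) :
    (∑' k : ℕ, (k : ℝ) ^ 2 * t ^ k / (1 + t ^ k) ^ 2)
      = (∑' k : ℕ, (k : ℝ) ^ 2 * t ^ k / (1 - t ^ k) ^ 2)
        - 4 * ∑' k : ℕ, (k : ℝ) ^ 2 * (t ^ 2) ^ k / (1 - (t ^ 2) ^ k) ^ 2 := by
  have h20 : 0 < t ^ 2 := by positivity
  have h21 : t ^ 2 < 1 := by nlinarith
  have hS1 := summable_S h0 h1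
  have hS2 := (summable_S h20 h21).mul_left 4
  calc (∑' k : ℕ, (k : ℝ) ^ 2 * t ^ k / (1 + t ^ k) ^ 2)
      = ∑' k : ℕ, ((k : ℝ) ^ 2 * t ^ k / (1 - t ^ k) ^ 2
          - 4 * ((k : ℝ) ^ 2 * (t ^ 2) ^ k / (1 - (t ^ 2) ^ k) ^ 2)) := by
        apply tsum_congr
        intro k
        cases k with
        | zero => norm_num
        | succ k =>
          have hy0 : 0 < t ^ (k + 1) := pow_pos h0 _
          have hy1 : t ^ (k + 1) < 1 := pow_lt_one₀ h0.le h1 (Nat.succ_ne_zero k)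
          have ht2 : (t ^ 2) ^ (k + 1) = (t ^ (k + 1)) ^ 2 := by
            rw [← pow_mul, mul_comm, pow_mul]
          rw [ht2]
          have h1' : (1 : ℝ) + t ^ (k + 1) ≠ 0 := by nlinarith
          have h2' : (1 : ℝ) - t ^ (k + 1) ≠ 0 := by nlinarith
          have h3' : (1 : ℝ) - (t ^ (k + 1)) ^ 2 ≠ 0 := by nlinarith
          field_simp
          ring
    _ = _ := by
        have hS2' : Summable (fun k : ℕ => 4 * ((k : ℝ) ^ 2 * (t ^ 2) ^ k / (1 - (t ^ 2) ^ k) ^ 2)) := hS2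
        rw [Summable.tsum_sub hS1 hS2', tsum_mul_left]

/-- Variance asymptotics for partitions into distinct parts: with
`σ²(t) = ∑_{k≥1} k² tᵏ/(1+tᵏ)²`, one has `σ²(e^{−r}) ∼ π²/(6r³)` as `r → 0⁺`.
(The `k = 0` term of the sum vanishes.) -/
theorem variance_distinct_partitions_asymptotic :
    Tendsto
      (fun r : ℝ =>
        (∑' k : ℕ, (k : ℝ) ^ 2 * Real.exp (-r) ^ k / (1 + Real.exp (-r) ^ k) ^ 2) /
          (π ^ 2 / (6 * r ^ 3)))
      (𝓝[>] (0 : ℝ)) (𝓝 1) := by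
  have hmap : Tendsto (fun r : ℝ => 2 * r) (𝓝[>] (0:ℝ)) (𝓝[>] (0:ℝ)) := by
    apply tendsto_nhdsWithin_of_tendsto_nhds_of_eventually_within
    · exact ((continuous_const.mul continuous_id).tendsto' 0 0 (by simp)).mono_left
        nhdsWithin_le_nhds
    · filter_upwards [self_mem_nhdsWithin] with r (hr : 0 < r)
      exact Set.mem_Ioi.2 (by linarith)
  have hexp2 : ∀ r : ℝ, exp (-(2 * r)) = exp (-r) ^ 2 := by
    intro r
    rw [← Real.exp_nat_mul]
    congr 1
    push_cast
    ring
  have L2 := tendsto_S.comp hmap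
  have T2 : Tendsto
      (fun r : ℝ => r ^ 3 * ∑' k : ℕ, (k : ℝ) ^ 2 * (exp (-r) ^ 2) ^ k / (1 - (exp (-r) ^ 2) ^ k) ^ 2)
      (𝓝[>] (0:ℝ)) (𝓝 (π ^ 2 / 24)) := by
    have h := L2.const_mul (1/8 : ℝ)
    rw [show (1/8 : ℝ) * (π ^ 2 / 3) = π ^ 2 / 24 by ring] at h
    apply h.congr
    intro r
    simp only [Function.comp_def, hexp2]
    ring
  have Lσ : Tendsto
      (fun r : ℝ => r ^ 3 * ∑' k : ℕ, (k : ℝ) ^ 2 * exp (-r) ^ k / (1 + exp (-r) ^ k) ^ 2)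
      (𝓝[>] (0:ℝ)) (𝓝 (π ^ 2 / 6)) := by
    have h := tendsto_S.sub (T2.const_mul 4)
    rw [show π ^ 2 / 3 - 4 * (π ^ 2 / 24) = π ^ 2 / 6 by ring] at h
    apply h.congr'
    filter_upwards [self_mem_nhdsWithin] with r (hr : 0 < r)
    have h0 : 0 < exp (-r) := exp_pos _
    have h1 : exp (-r) < 1 := exp_lt_one_iff.2 (by linarith)
    rw [sigma_eq h0 h1]
    ring
  have hπ : (π : ℝ) ≠ 0 := Real.pi_ne_zero
  have h := Lσ.mul_const (6 / π ^ 2)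
  rw [show (π ^ 2 / 6) * (6 / π ^ 2) = 1 by field_simp] at h
  apply h.congr'
  filter_upwards [self_mem_nhdsWithin] with r (hr : 0 < r)
  have hr' : r ≠ 0 := ne_of_gt hr
  field_simp
end

section
/- Let Γ₃(t) = ∑_{k=1}^{∞} k³ (t^{3k}+tᵏ)/(1+tᵏ)⁴ and σ²(t) = ∑_{k=1}^{∞} k² tᵏ/(1+tᵏ)² for t ∈ (0,1). Then Γ₃(e^{−r}) ∼ C/r⁴ as r → 0⁺, where C = ∫₀^{∞} x³(e^{−3x}+e^{−x})/(1+e^{−x})⁴ dx; consequently Γ₃(t)/σ(t)³ → 0 as t → 1⁻. -/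
open Filter Topology Real MeasureTheory

open Set ENNReal

lemma rs_sum_eq_integral (F : ℝ → ℝ) (hc : Continuous F) (h0 : F 0 = 0)
    {M : ℝ} (hM : ∀ x, 0 ≤ x → |F x| ≤ M * Real.exp (-(x/2)))
    {r : ℝ} (hr : 0 < r) :
    ∑' k : ℕ, r * F (r * k) = ∫ x in Set.Ioi (0:ℝ), F (r * ⌈x / r⌉) := by
  have hM0 : 0 ≤ M := by
    have := hM 0 le_rfl
    simpa [h0] using this
  -- the pieces
  set s : ℕ → Set ℝ := fun k => Ioc ((k:ℝ) * r) ((k+1 : ℕ) * r) with hs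
  have hmem : ∀ (k : ℕ) (x : ℝ), x ∈ s k → (⌈x / r⌉ : ℝ) = (k+1 : ℕ) := by
    intro k x hx
    have h1 : (k : ℝ) < x / r := (lt_div_iff₀ hr).2 (by simpa using hx.1)
    have h2 : x / r ≤ (k+1 : ℕ) := (div_le_iff₀ hr).2 (by simpa using hx.2)
    have : ⌈x / r⌉ = ((k+1 : ℕ) : ℤ) := by
      rw [Int.ceil_eq_iff]
      constructor
      · push_cast; push_cast at h1; linarith
      · push_cast; push_cast at h2; linarith
    rw [this]; push_cast; ring
  have hunion : (⋃ k : ℕ, s k) = Ioi (0:ℝ) := by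
    ext x
    simp only [mem_iUnion, hs, mem_Ioc, mem_Ioi]
    constructor
    · rintro ⟨k, h1, h2⟩
      have : (0:ℝ) ≤ (k:ℝ) * r := by positivity
      linarith
    · intro hx
      have hxr : 0 < x / r := div_pos hx hr
      have h1 : (1:ℤ) ≤ ⌈x / r⌉ := by
        exact_mod_cast Int.ceil_pos.2 hxr
      refine ⟨(⌈x / r⌉ - 1).toNat, ?_, ?_⟩
      · have hcast : ((⌈x / r⌉ - 1).toNat : ℝ) = (⌈x / r⌉ : ℝ) - 1 := by
          have := Int.toNat_of_nonneg (by omega : (0:ℤ) ≤ ⌈x / r⌉ - 1)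
          exact_mod_cast congrArg (Int.cast : ℤ → ℝ) this
        rw [hcast]
        have := Int.ceil_lt_add_one (x / r)
        have h2 : (⌈x / r⌉ : ℝ) - 1 < x / r := by linarith
        calc ((⌈x / r⌉ : ℝ) - 1) * r < (x / r) * r := by
              exact mul_lt_mul_of_pos_right h2 hr
          _ = x := by field_simp
      · have hcast : (((⌈x / r⌉ - 1).toNat + 1 : ℕ) : ℝ) = (⌈x / r⌉ : ℝ) := by
          have h2 : (((⌈x / r⌉ - 1).toNat : ℕ) : ℝ) = (⌈x / r⌉ : ℝ) - 1 := by
            exact_mod_cast Int.toNat_of_nonneg (by omega : (0:ℤ) ≤ ⌈x / r⌉ - 1)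
          push_cast at h2 ⊢
          linarith
        rw [hcast]
        have := Int.le_ceil (x / r)
        calc x = (x / r) * r := by field_simp
          _ ≤ (⌈x / r⌉ : ℝ) * r := mul_le_mul_of_nonneg_right this hr.le
  have hmeas : ∀ k, MeasurableSet (s k) := fun k => measurableSet_Ioc
  have hdisj : Pairwise (Function.onFun Disjoint s) := by
    intro i j hij
    simp only [Function.onFun, hs]
    rw [Set.Ioc_disjoint_Ioc]
    rcases lt_or_gt_of_ne hij with h | h
    · have : ((i+1:ℕ):ℝ) * r ≤ ((j:ℕ):ℝ) * r := by
        apply mul_le_mul_of_nonneg_right _ hr.le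
        exact_mod_cast Nat.succ_le_of_lt h
      calc min (((i+1:ℕ):ℝ)*r) (((j+1:ℕ):ℝ)*r) ≤ ((i+1:ℕ):ℝ)*r := min_le_left _ _
        _ ≤ ((j:ℕ):ℝ)*r := this
        _ ≤ max (((i:ℕ):ℝ)*r) (((j:ℕ):ℝ)*r) := le_max_right _ _
    · have : ((j+1:ℕ):ℝ) * r ≤ ((i:ℕ):ℝ) * r := by
        apply mul_le_mul_of_nonneg_right _ hr.le
        exact_mod_cast Nat.succ_le_of_lt h
      calc min (((i+1:ℕ):ℝ)*r) (((j+1:ℕ):ℝ)*r) ≤ ((j+1:ℕ):ℝ)*r := min_le_right _ _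
        _ ≤ ((i:ℕ):ℝ)*r := this
        _ ≤ max (((i:ℕ):ℝ)*r) (((j:ℕ):ℝ)*r) := le_max_left _ _
  -- measurability of the step function
  have hstepmeas : Measurable (fun x : ℝ => F (r * ⌈x / r⌉)) := by
    apply hc.measurable.comp
    exact measurable_const.mul (measurable_from_top.comp ((measurable_id.div_const r).ceil))
  -- domination on Ioi 0
  have hdom : ∀ x ∈ Ioi (0:ℝ), |F (r * ⌈x / r⌉)| ≤ M * Real.exp (-(x/2)) := by
    intro x hx
    have hxr : x ≤ r * ⌈x / r⌉ := by
      have := Int.le_ceil (x / r)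
      calc x = (x / r) * r := by field_simp
        _ ≤ (⌈x / r⌉ : ℝ) * r := mul_le_mul_of_nonneg_right this hr.le
        _ = r * ⌈x / r⌉ := by ring
    have h1 := hM _ (le_trans (le_of_lt hx) hxr)
    refine h1.trans ?_
    apply mul_le_mul_of_nonneg_left _ hM0
    apply Real.exp_le_exp.2
    linarith
  have hbound_int : IntegrableOn (fun x => M * Real.exp (-(x/2))) (Ioi (0:ℝ)) := by
    have : IntegrableOn (fun x => Real.exp (-(1/2) * x)) (Ioi (0:ℝ)) :=
      exp_neg_integrableOn_Ioi 0 (by norm_num)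
    have h2 := this.const_mul M
    have he : (fun x : ℝ => M * Real.exp (-(x/2))) = fun x => M * Real.exp (-(1/2) * x) := by
      funext x; ring_nf
    rw [he]
    exact h2
  have hint : IntegrableOn (fun x : ℝ => F (r * ⌈x / r⌉)) (Ioi (0:ℝ)) := by
    apply Integrable.mono' hbound_int (hstepmeas.aestronglyMeasurable)
    filter_upwards [ae_restrict_mem measurableSet_Ioi] with x hx
    simpa using hdom x hx
  -- compute
  rw [← hunion] at hint ⊢
  rw [MeasureTheory.integral_iUnion hmeas hdisj hint]
  have hval : ∀ k : ℕ, ∫ x in s k, F (r * ⌈x / r⌉) = r * F (r * (k+1 : ℕ)) := by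
    intro k
    have : ∀ x ∈ s k, F (r * ⌈x / r⌉) = F (r * (k+1 : ℕ)) := by
      intro x hx; rw [hmem k x hx]
    rw [setIntegral_congr_fun (hmeas k) this]
    rw [setIntegral_const]
    simp only [hs, Real.volume_Ioc]
    rw [Real.volume_real_Ioc_of_le (by push_cast; nlinarith : (k:ℝ)*r ≤ ((k+1:ℕ):ℝ) * r)]
    rw [smul_eq_mul]
    push_cast
    ring_nf
  simp_rw [hval]
  -- summability of the full sequence
  have hsum : Summable (fun k : ℕ => r * F (r * k)) := by
    apply Summable.of_abs
    have hgeo : Summable (fun k : ℕ => r * M * Real.exp (-(r/2)) ^ k) :=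
      (summable_geometric_of_lt_one (Real.exp_nonneg _)
        (Real.exp_lt_one_iff.2 (by linarith : -(r/2) < 0))).mul_left (r * M)
    apply Summable.of_nonneg_of_le (fun k => abs_nonneg _) _ hgeo
    intro k
    have h1 : |r * F (r * k)| = r * |F (r * k)| := by
      rw [abs_mul, abs_of_pos hr]
    rw [h1]
    have h2 := hM (r * k) (by positivity)
    have h3 : Real.exp (-(r * k / 2)) = Real.exp (-(r/2)) ^ k := by
      rw [← Real.exp_nat_mul]; congr 1; ring
    calc r * |F (r * k)| ≤ r * (M * Real.exp (-(r * k / 2))) := by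
          exact mul_le_mul_of_nonneg_left h2 hr.le
      _ = r * M * Real.exp (-(r/2)) ^ k := by rw [h3]; ring
  rw [Summable.tsum_eq_zero_add hsum]
  simp only [Nat.cast_zero, mul_zero, h0, mul_zero, zero_add]

lemma rs_tendsto (F : ℝ → ℝ) (hc : Continuous F) (h0 : F 0 = 0)
    {M : ℝ} (hM : ∀ x, 0 ≤ x → |F x| ≤ M * Real.exp (-(x/2))) :
    Tendsto (fun r : ℝ => ∑' k : ℕ, r * F (r * k)) (𝓝[>] (0:ℝ))
      (𝓝 (∫ x in Set.Ioi (0:ℝ), F x)) := by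
  have hM0 : 0 ≤ M := by
    have := hM 0 le_rfl
    simpa [h0] using this
  have hbound_int : IntegrableOn (fun x => M * Real.exp (-(x/2))) (Ioi (0:ℝ)) := by
    have : IntegrableOn (fun x => Real.exp (-(1/2) * x)) (Ioi (0:ℝ)) :=
      exp_neg_integrableOn_Ioi 0 (by norm_num)
    have h2 := this.const_mul M
    have he : (fun x : ℝ => M * Real.exp (-(x/2))) = fun x => M * Real.exp (-(1/2) * x) := by
      funext x; ring_nf
    rw [he]
    exact h2
  have hstepmeas : ∀ r : ℝ, Measurable (fun x : ℝ => F (r * ⌈x / r⌉)) := by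
    intro r
    apply hc.measurable.comp
    exact measurable_const.mul (measurable_from_top.comp ((measurable_id.div_const r).ceil))
  have hmain : Tendsto (fun r : ℝ => ∫ x in Set.Ioi (0:ℝ), F (r * ⌈x / r⌉)) (𝓝[>] (0:ℝ))
      (𝓝 (∫ x in Set.Ioi (0:ℝ), F x)) := by
    apply MeasureTheory.tendsto_integral_filter_of_dominated_convergence
      (fun x => M * Real.exp (-(x/2)))
    · exact Eventually.of_forall fun r => (hstepmeas r).aestronglyMeasurable.restrict
    · filter_upwards [self_mem_nhdsWithin] with r hr
      filter_upwards [ae_restrict_mem measurableSet_Ioi] with x hx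
      have hr : (0:ℝ) < r := hr
      have hx : (0:ℝ) < x := hx
      have hxr : x ≤ r * ⌈x / r⌉ := by
        have := Int.le_ceil (x / r)
        calc x = (x / r) * r := by field_simp
          _ ≤ (⌈x / r⌉ : ℝ) * r := mul_le_mul_of_nonneg_right this hr.le
          _ = r * ⌈x / r⌉ := by ring
      rw [Real.norm_eq_abs]
      refine (hM _ (hx.le.trans hxr)).trans ?_
      apply mul_le_mul_of_nonneg_left _ hM0
      apply Real.exp_le_exp.2
      linarith
    · exact hbound_int
    · filter_upwards [ae_restrict_mem measurableSet_Ioi] with x hx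
      have hx : (0:ℝ) < x := hx
      have harg : Tendsto (fun r : ℝ => r * ⌈x / r⌉) (𝓝[>] (0:ℝ)) (𝓝 x) := by
        have hupper : Tendsto (fun r : ℝ => x + r) (𝓝[>] (0:ℝ)) (𝓝 x) := by
          have : Tendsto (fun r : ℝ => x + r) (𝓝 (0:ℝ)) (𝓝 (x + 0)) :=
            (tendsto_const_nhds.add tendsto_id)
          simpa using this.mono_left nhdsWithin_le_nhds
        apply tendsto_of_tendsto_of_tendsto_of_le_of_le' tendsto_const_nhds hupper
        · filter_upwards [self_mem_nhdsWithin] with r hr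
          have hr : (0:ℝ) < r := hr
          have := Int.le_ceil (x / r)
          calc x = (x / r) * r := by field_simp
            _ ≤ (⌈x / r⌉ : ℝ) * r := mul_le_mul_of_nonneg_right this hr.le
            _ = r * ⌈x / r⌉ := by ring
        · filter_upwards [self_mem_nhdsWithin] with r hr
          have hr : (0:ℝ) < r := hr
          have h2 : (⌈x / r⌉ : ℝ) < x / r + 1 := Int.ceil_lt_add_one (x / r)
          have := mul_lt_mul_of_pos_left h2 hr
          have h4 : r * (x / r + 1) = x + r := by field_simp
          linarith
      exact ((hc.tendsto x).comp harg).congr (fun r => rfl)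
  apply hmain.congr'
  filter_upwards [self_mem_nhdsWithin] with r hr
  exact (rs_sum_eq_integral F hc h0 hM hr).symm

noncomputable def G3 (x : ℝ) : ℝ := x^3 * (Real.exp (-3*x) + Real.exp (-x)) / (1 + Real.exp (-x))^4
noncomputable def H2 (x : ℝ) : ℝ := x^2 * Real.exp (-x) / (1 + Real.exp (-x))^2

lemma G3_cont : Continuous G3 := by
  apply Continuous.div
  · fun_prop
  · fun_prop
  · intro x; positivity

lemma H2_cont : Continuous H2 := by
  apply Continuous.div
  · fun_prop
  · fun_prop
  · intro x; positivity

lemma G3_zero : G3 0 = 0 := by simp [G3]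

lemma H2_zero : H2 0 = 0 := by simp [H2]

lemma G3_nonneg {x : ℝ} (hx : 0 ≤ x) : 0 ≤ G3 x := by
  unfold G3; positivity

lemma H2_nonneg {x : ℝ} (hx : 0 ≤ x) : 0 ≤ H2 x := by
  unfold H2; positivity

lemma cube_bound {x : ℝ} (hx : 0 ≤ x) : x ^ 3 ≤ 216 * Real.exp (x / 2) := by
  have h1 : x / 6 ≤ Real.exp (x / 6) := by
    have := Real.add_one_le_exp (x / 6)
    linarith
  have h2 : (x / 6) ^ 3 ≤ Real.exp (x / 6) ^ 3 := by
    apply pow_le_pow_left₀ (by positivity) h1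
  have h3 : Real.exp (x / 6) ^ 3 = Real.exp (x / 2) := by
    rw [← Real.exp_nat_mul]; norm_num; ring_nf
  rw [h3] at h2
  nlinarith

lemma sq_bound {x : ℝ} (hx : 0 ≤ x) : x ^ 2 ≤ 16 * Real.exp (x / 2) := by
  have h1 : x / 4 ≤ Real.exp (x / 4) := by
    have := Real.add_one_le_exp (x / 4)
    linarith
  have h2 : (x / 4) ^ 2 ≤ Real.exp (x / 4) ^ 2 := by
    apply pow_le_pow_left₀ (by positivity) h1
  have h3 : Real.exp (x / 4) ^ 2 = Real.exp (x / 2) := by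
    rw [← Real.exp_nat_mul]; norm_num; ring_nf
  rw [h3] at h2
  nlinarith

lemma exp_half_mul (x : ℝ) : Real.exp (x / 2) * Real.exp (-x) = Real.exp (-(x/2)) := by
  rw [← Real.exp_add]; ring_nf

lemma G3_bound : ∀ x : ℝ, 0 ≤ x → |G3 x| ≤ 432 * Real.exp (-(x/2)) := by
  intro x hx
  rw [abs_of_nonneg (G3_nonneg hx)]
  have hE : Real.exp (-x) ≤ 1 := Real.exp_le_one_iff.2 (by linarith)
  have hE3 : Real.exp (-3*x) ≤ Real.exp (-x) := Real.exp_le_exp.2 (by linarith)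
  have hEpos := Real.exp_pos (-x)
  have hden : (1:ℝ) ≤ (1 + Real.exp (-x))^4 := one_le_pow₀ (by linarith)
  have h1 : G3 x ≤ x^3 * (Real.exp (-3*x) + Real.exp (-x)) :=
    div_le_self (by positivity) hden
  have h2 : x^3 * (Real.exp (-3*x) + Real.exp (-x)) ≤ 2 * (x^3 * Real.exp (-x)) := by
    nlinarith [pow_nonneg hx 3]
  have h3 : x^3 * Real.exp (-x) ≤ 216 * Real.exp (-(x/2)) := by
    have := cube_bound hx
    have h4 := mul_le_mul_of_nonneg_right this hEpos.le
    rw [mul_assoc, exp_half_mul] at h4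
    exact h4
  linarith

lemma H2_bound : ∀ x : ℝ, 0 ≤ x → |H2 x| ≤ 32 * Real.exp (-(x/2)) := by
  intro x hx
  rw [abs_of_nonneg (H2_nonneg hx)]
  have hEpos := Real.exp_pos (-x)
  have hden : (1:ℝ) ≤ (1 + Real.exp (-x))^2 := one_le_pow₀ (by linarith)
  have h1 : H2 x ≤ x^2 * Real.exp (-x) :=
    div_le_self (by positivity) hden
  have h3 : x^2 * Real.exp (-x) ≤ 16 * Real.exp (-(x/2)) := by
    have := sq_bound hx
    have h4 := mul_le_mul_of_nonneg_right this hEpos.le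
    rw [mul_assoc, exp_half_mul] at h4
    exact h4
  have : (0:ℝ) < Real.exp (-(x/2)) := Real.exp_pos _
  linarith

lemma int_on (F : ℝ → ℝ) (hc : Continuous F) {M : ℝ}
    (hM : ∀ x, 0 ≤ x → |F x| ≤ M * Real.exp (-(x/2))) :
    IntegrableOn F (Ioi (0:ℝ)) := by
  have hbound_int : IntegrableOn (fun x => M * Real.exp (-(x/2))) (Ioi (0:ℝ)) := by
    have : IntegrableOn (fun x => Real.exp (-(1/2) * x)) (Ioi (0:ℝ)) :=
      exp_neg_integrableOn_Ioi 0 (by norm_num)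
    have h2 := this.const_mul M
    have he : (fun x : ℝ => M * Real.exp (-(x/2))) = fun x => M * Real.exp (-(1/2) * x) := by
      funext x; ring_nf
    rw [he]; exact h2
  apply Integrable.mono' hbound_int hc.aestronglyMeasurable.restrict
  filter_upwards [ae_restrict_mem measurableSet_Ioi] with x hx
  simpa using hM x (le_of_lt hx)

lemma int_pos (F : ℝ → ℝ) (hc : Continuous F) {M : ℝ}
    (hM : ∀ x, 0 ≤ x → |F x| ≤ M * Real.exp (-(x/2)))
    (hnn : ∀ x, 0 ≤ x → 0 ≤ F x) (hpos : ∀ x, 0 < x → 0 < F x) :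
    0 < ∫ x in Set.Ioi (0:ℝ), F x := by
  rw [setIntegral_pos_iff_support_of_nonneg_ae _ (int_on F hc hM)]
  · have hsub : Ioi (0:ℝ) ⊆ Function.support F ∩ Ioi 0 := by
      intro x hx
      exact ⟨ne_of_gt (hpos x hx), hx⟩
    calc (0:ℝ≥0∞) < ⊤ := by norm_num
      _ = volume (Ioi (0:ℝ)) := (Real.volume_Ioi).symm
      _ ≤ volume (Function.support F ∩ Ioi 0) := measure_mono hsub
  · filter_upwards [ae_restrict_mem measurableSet_Ioi] with x hx
    exact hnn x (le_of_lt hx)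

lemma term_G {r : ℝ} (hr : 0 < r) (k : ℕ) :
    (k:ℝ)^3 * (Real.exp (-r) ^ (3*k) + Real.exp (-r)^k) / (1 + Real.exp (-r)^k)^4
      = r * G3 (r*k) / r^4 := by
  have hE : Real.exp (-r) ^ k = Real.exp (-(r*k)) := by
    rw [← Real.exp_nat_mul]; exact congrArg Real.exp (by ring)
  have hE3 : Real.exp (-r) ^ (3*k) = Real.exp (-(r*k)) ^ 3 := by
    rw [pow_mul', hE]
  have hG : Real.exp (-3*(r*(k:ℝ))) = Real.exp (-(r*k)) ^ 3 := by
    rw [← Real.exp_nat_mul]; exact congrArg Real.exp (by push_cast; ring)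
  rw [hE, hE3]
  unfold G3
  rw [hG]
  have hden : (0:ℝ) < (1 + Real.exp (-(r*(k:ℝ))))^4 := by positivity
  field_simp

lemma term_H {r : ℝ} (hr : 0 < r) (k : ℕ) :
    (k:ℝ)^2 * Real.exp (-r)^k / (1 + Real.exp (-r)^k)^2
      = r * H2 (r*k) / r^3 := by
  have hE : Real.exp (-r) ^ k = Real.exp (-(r*k)) := by
    rw [← Real.exp_nat_mul]; exact congrArg Real.exp (by ring)
  rw [hE]
  unfold H2
  have hden : (0:ℝ) < (1 + Real.exp (-(r*(k:ℝ))))^2 := by positivity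
  field_simp

lemma tsum_G {r : ℝ} (hr : 0 < r) :
    (∑' k : ℕ, (k:ℝ)^3 * (Real.exp (-r) ^ (3*k) + Real.exp (-r)^k) / (1 + Real.exp (-r)^k)^4)
      = (∑' k : ℕ, r * G3 (r*k)) / r^4 := by
  rw [← tsum_div_const]
  exact tsum_congr fun k => term_G hr k

lemma tsum_H {r : ℝ} (hr : 0 < r) :
    (∑' k : ℕ, (k:ℝ)^2 * Real.exp (-r)^k / (1 + Real.exp (-r)^k)^2)
      = (∑' k : ℕ, r * H2 (r*k)) / r^3 := by
  rw [← tsum_div_const]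
  exact tsum_congr fun k => term_H hr k

lemma alg_sqrt {S T r : ℝ} (hr : 0 < r) (hT : 0 ≤ T) :
    (S/r^4)/(Real.sqrt (T/r^3))^3 = S * Real.sqrt r / (Real.sqrt T)^3 := by
  have hx : Real.sqrt (r^3) = r * Real.sqrt r := by
    rw [show r^3 = r^2 * r by ring, Real.sqrt_mul (sq_nonneg r), Real.sqrt_sq hr.le]
  have h3 : Real.sqrt (T/r^3) = Real.sqrt T / (r * Real.sqrt r) := by
    rw [Real.sqrt_div hT, hx]
  have h4 : (r * Real.sqrt r)^3 = r^4 * Real.sqrt r := by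
    have hs : Real.sqrt r ^ 2 = r := Real.sq_sqrt hr.le
    calc (r * Real.sqrt r)^3 = r^3 * (Real.sqrt r ^2 * Real.sqrt r) := by ring
      _ = r^4 * Real.sqrt r := by rw [hs]; ring
  rw [h3, div_pow, h4]
  by_cases hT0 : Real.sqrt T = 0
  · simp [hT0]
  · have hrs : Real.sqrt r ≠ 0 := by positivity
    field_simp

/-- Third-moment asymptotics for partitions into distinct parts: with
`Γ₃(t) = ∑_{k≥1} k³(t^{3k}+tᵏ)/(1+tᵏ)⁴` and `σ²(t) = ∑_{k≥1} k² tᵏ/(1+tᵏ)²`,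
one has `Γ₃(e^{−r}) ∼ C/r⁴` as `r → 0⁺` with
`C = ∫₀^∞ x³(e^{−3x}+e^{−x})/(1+e^{−x})⁴ dx`, and consequently
`Γ₃(t)/σ(t)³ → 0` as `t → 1⁻`. (The `k = 0` terms of both sums vanish.) -/
theorem third_moment_distinct_partitions_asymptotic :
    Tendsto
      (fun r : ℝ =>
        (∑' k : ℕ, (k : ℝ) ^ 3 * (Real.exp (-r) ^ (3 * k) + Real.exp (-r) ^ k) /
            (1 + Real.exp (-r) ^ k) ^ 4) /
          ((∫ x in Set.Ioi (0 : ℝ),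
              x ^ 3 * (Real.exp (-3 * x) + Real.exp (-x)) / (1 + Real.exp (-x)) ^ 4) /
            r ^ 4))
      (𝓝[>] (0 : ℝ)) (𝓝 1) ∧
    Tendsto
      (fun t : ℝ =>
        (∑' k : ℕ, (k : ℝ) ^ 3 * (t ^ (3 * k) + t ^ k) / (1 + t ^ k) ^ 4) /
          Real.sqrt (∑' k : ℕ, (k : ℝ) ^ 2 * t ^ k / (1 + t ^ k) ^ 2) ^ 3)
      (𝓝[<] (1 : ℝ)) (𝓝 0) := by
  have hCdef : (∫ x in Set.Ioi (0 : ℝ),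
      x ^ 3 * (Real.exp (-3 * x) + Real.exp (-x)) / (1 + Real.exp (-x)) ^ 4)
      = ∫ x in Set.Ioi (0:ℝ), G3 x := rfl
  have hS := rs_tendsto G3 G3_cont G3_zero G3_bound
  have hT := rs_tendsto H2 H2_cont H2_zero H2_bound
  have hC : 0 < ∫ x in Set.Ioi (0:ℝ), G3 x :=
    int_pos G3 G3_cont G3_bound (fun x hx => G3_nonneg hx)
      (fun x hx => by unfold G3; positivity)
  have hc2 : 0 < ∫ x in Set.Ioi (0:ℝ), H2 x :=
    int_pos H2 H2_cont H2_bound (fun x hx => H2_nonneg hx)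
      (fun x hx => by unfold H2; positivity)
  constructor
  · -- part 1
    have h1 : Tendsto (fun r : ℝ => (∑' k : ℕ, r * G3 (r*k)) / (∫ x in Set.Ioi (0:ℝ), G3 x))
        (𝓝[>] (0:ℝ)) (𝓝 ((∫ x in Set.Ioi (0:ℝ), G3 x) / (∫ x in Set.Ioi (0:ℝ), G3 x))) :=
      hS.div_const _
    rw [div_self hC.ne'] at h1
    apply h1.congr'
    filter_upwards [self_mem_nhdsWithin] with r hr
    have hr : (0:ℝ) < r := hr
    rw [hCdef, tsum_G hr, div_div_div_comm, div_self (pow_ne_zero 4 hr.ne'), div_one]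
  · -- part 2
    have hsqr : Tendsto (fun r : ℝ => Real.sqrt r) (𝓝[>] (0:ℝ)) (𝓝 0) := by
      have := (Real.continuous_sqrt.tendsto 0).mono_left (nhdsWithin_le_nhds (s := Set.Ioi (0:ℝ)))
      simpa using this
    have hnum : Tendsto (fun r : ℝ => (∑' k : ℕ, r * G3 (r*k)) * Real.sqrt r)
        (𝓝[>] (0:ℝ)) (𝓝 ((∫ x in Set.Ioi (0:ℝ), G3 x) * 0)) := hS.mul hsqr
    rw [mul_zero] at hnum
    have hden : Tendsto (fun r : ℝ => (Real.sqrt (∑' k : ℕ, r * H2 (r*k)))^3)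
        (𝓝[>] (0:ℝ)) (𝓝 ((Real.sqrt (∫ x in Set.Ioi (0:ℝ), H2 x))^3)) :=
      ((Real.continuous_sqrt.tendsto _).comp hT).pow 3
    have hdne : (Real.sqrt (∫ x in Set.Ioi (0:ℝ), H2 x))^3 ≠ 0 := by
      positivity
    have key : Tendsto (fun r : ℝ =>
        (∑' k : ℕ, r * G3 (r*k)) * Real.sqrt r / (Real.sqrt (∑' k : ℕ, r * H2 (r*k)))^3)
        (𝓝[>] (0:ℝ)) (𝓝 0) := by
      have := hnum.div hden hdne
      rw [zero_div] at this
      exact this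
    have hlog : Tendsto (fun t : ℝ => -Real.log t) (𝓝[<] (1:ℝ)) (𝓝[>] (0:ℝ)) := by
      rw [tendsto_nhdsWithin_iff]
      constructor
      · have h2 : Tendsto (fun t : ℝ => -Real.log t) (𝓝 (1:ℝ)) (𝓝 (-Real.log 1)) :=
          ((Real.continuousAt_log one_ne_zero).neg).tendsto
        simp only [Real.log_one, neg_zero] at h2
        exact h2.mono_left nhdsWithin_le_nhds
      · filter_upwards [Ioo_mem_nhdsLT_of_mem (by norm_num : (1:ℝ) ∈ Set.Ioc (0:ℝ) 1)]
          with t ht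
        exact Set.mem_Ioi.2 (by linarith [Real.log_neg ht.1 ht.2])
    apply (key.comp hlog).congr'
    filter_upwards [Ioo_mem_nhdsLT_of_mem (by norm_num : (1:ℝ) ∈ Set.Ioc (0:ℝ) 1)]
      with t ht
    obtain ⟨ht0, ht1⟩ := ht
    have hr : (0:ℝ) < -Real.log t := by
      have := Real.log_neg ht0 ht1
      linarith
    have hexp : Real.exp (-(-Real.log t)) = t := by rw [neg_neg, Real.exp_log ht0]
    have hgam := tsum_G hr
    have hsig := tsum_H hr
    rw [hexp] at hgam hsig
    have hTnn : (0:ℝ) ≤ ∑' k : ℕ, (-Real.log t) * H2 ((-Real.log t)*k) := by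
      apply tsum_nonneg
      intro k
      have : (0:ℝ) ≤ H2 ((-Real.log t)*k) := H2_nonneg (by positivity)
      positivity
    show (∑' k : ℕ, (-Real.log t) * G3 ((-Real.log t)*k)) * Real.sqrt (-Real.log t) /
        (Real.sqrt (∑' k : ℕ, (-Real.log t) * H2 ((-Real.log t)*k)))^3 = _
    rw [hgam, hsig]
    exact (alg_sqrt hr hTnn).symm
end

section
/- Let σ²(t) = ∑_{k=1}^{∞} k² tᵏ/(1+tᵏ)² for t ∈ (0,1). Then lim_{t→1⁻} sup_{n≥1} [n² tⁿ/(1+tⁿ)²] / σ²(t) = 0. -/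
open Filter Topology

/-- Uniform negligibility of individual variances: with
`σ²(t) = ∑_{k≥1} k² tᵏ/(1+tᵏ)²`, one has
`lim_{t→1⁻} sup_{n≥1} (n² tⁿ/(1+tⁿ)²)/σ²(t) = 0`, stated here in `ε`-form. -/
theorem sup_variance_ratio_tendsto_zero :
    ∀ ε > (0 : ℝ), ∀ᶠ t in 𝓝[<] (1 : ℝ), ∀ n : ℕ, 1 ≤ n →
      ((n : ℝ) ^ 2 * t ^ n / (1 + t ^ n) ^ 2) /
          (∑' k : ℕ, (k : ℝ) ^ 2 * t ^ k / (1 + t ^ k) ^ 2) ≤ ε := by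
  intro ε hε
  obtain ⟨m, hm⟩ := exists_nat_gt (8 / ε)
  have hm0 : (0:ℝ) < m := lt_of_le_of_lt (by positivity) hm
  have h8 : 8 < (m:ℝ) * ε := by rwa [div_lt_iff₀ hε] at hm
  have h1 : ∀ᶠ t in 𝓝[<] (1 : ℝ), (1:ℝ)/2 < t ^ m := by
    have hc : Filter.Tendsto (fun t : ℝ => t ^ m) (𝓝 1) (𝓝 1) := by
      simpa using (continuous_pow m).tendsto (1:ℝ)
    exact (hc.eventually (eventually_gt_nhds (by norm_num))).filter_mono
      nhdsWithin_le_nhds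
  have h2 : ∀ᶠ t in 𝓝[<] (1 : ℝ), (0:ℝ) < t :=
    (eventually_gt_nhds (by norm_num : (0:ℝ) < 1)).filter_mono nhdsWithin_le_nhds
  filter_upwards [h1, h2, eventually_mem_nhdsWithin] with t htm ht0 ht1'
  have ht1 : t < 1 := ht1'
  intro n hn
  have hn0 : (0:ℝ) < n := by exact_mod_cast hn
  set f : ℕ → ℝ := fun k => (k:ℝ)^2 * t^k / (1 + t^k)^2 with hf
  have htk : ∀ k : ℕ, 0 < t ^ k := fun k => pow_pos ht0 k
  have hnonneg : ∀ k, 0 ≤ f k := by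
    intro k
    have := htk k
    positivity
  have hle : ∀ k, f k ≤ (k:ℝ)^2 * t^k := by
    intro k
    apply div_le_self (by have := (htk k).le; positivity)
    nlinarith [htk k, sq_nonneg (t^k)]
  have hsum : Summable f := by
    refine Summable.of_nonneg_of_le hnonneg hle ?_
    have := summable_pow_mul_geometric_of_norm_lt_one (R := ℝ) 2
      (r := t) (by rw [Real.norm_eq_abs, abs_of_pos ht0]; exact ht1)
    simpa using this
  have hterm : ∀ k ∈ Finset.Ico n (n+m), (n:ℝ)^2 * t^(n+m) / 4 ≤ f k := by
    intro k hk
    rw [Finset.mem_Ico] at hk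
    have hnk : (n:ℝ) ≤ (k:ℝ) := by exact_mod_cast hk.1
    have hk1 : (n:ℝ)^2 ≤ (k:ℝ)^2 := by gcongr
    have hk2 : t^(n+m) ≤ t^k := pow_le_pow_of_le_one ht0.le ht1.le hk.2.le
    have hk3 : t^k ≤ 1 := pow_le_one₀ ht0.le ht1.le
    have hk4 : (1 + t^k)^2 ≤ 4 := by nlinarith [htk k]
    exact div_le_div₀ (by positivity)
      (by nlinarith [htk k, (htk (n+m)).le, sq_nonneg (n:ℝ)]) (by positivity) hk4
  have hS : (m:ℝ) * ((n:ℝ)^2 * t^(n+m) / 4) ≤ ∑' k, f k := by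
    calc (m:ℝ) * ((n:ℝ)^2 * t^(n+m) / 4)
        = ∑ _k ∈ Finset.Ico n (n+m), (n:ℝ)^2 * t^(n+m)/4 := by
          rw [Finset.sum_const, Nat.card_Ico]
          simp [nsmul_eq_mul]
      _ ≤ ∑ k ∈ Finset.Ico n (n+m), f k := Finset.sum_le_sum hterm
      _ ≤ ∑' k, f k := Summable.sum_le_tsum _ (fun k _ => hnonneg k) hsum
  have hSpos : 0 < ∑' k, f k :=
    lt_of_lt_of_le (by positivity) hS
  rw [div_le_iff₀ hSpos]
  have h4 : (4:ℝ) ≤ ε * m * t^m := by nlinarith [htk m]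
  calc f n ≤ (n:ℝ)^2 * t^n := hle n
    _ ≤ ε * ((m:ℝ) * ((n:ℝ)^2 * t^(n+m) / 4)) := by
        have h0 : (0:ℝ) ≤ (n:ℝ)^2 * t^n / 4 := by positivity
        have hmm := mul_le_mul_of_nonneg_left h4 h0
        calc (n:ℝ)^2 * t^n = (n:ℝ)^2 * t^n / 4 * 4 := by ring
          _ ≤ (n:ℝ)^2 * t^n / 4 * (ε * m * t^m) := hmm
          _ = ε * ((m:ℝ) * ((n:ℝ)^2 * t^(n+m) / 4)) := by rw [pow_add]; ring
    _ ≤ ε * ∑' k, f k := mul_le_mul_of_nonneg_left hS hε.le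
end

section
/- Let σ²(t) = ∑_{k=1}^{∞} k² tᵏ/(1+tᵏ)² and Γ₃(t) = ∑_{k=1}^{∞} k³ (t^{3k}+tᵏ)/(1+tᵏ)⁴ for t ∈ (0,1). Then for every t ∈ (0,1) and every θ ∈ ℝ with |θ| ≤ σ(t)³/(4 Γ₃(t)), one has ∏_{k=1}^{∞} |1 + tᵏ e^{i k θ/σ(t)}| / (1 + tᵏ) ≤ e^{−θ²/3}. -/
open Filter Topology

lemma cos_lb (x : ℝ) : x ^ 2 / 2 - |x| ^ 3 / 3 ≤ 1 - Real.cos x := by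
  have h : ∀ y : ℝ, 0 ≤ y → y ^ 2 / 2 - y ^ 3 / 3 ≤ 1 - Real.cos y := by
    intro y hy
    rcases le_or_gt y (3 / 2) with h32 | h32
    · rcases eq_or_lt_of_le hy with rfl | hy0
      · norm_num
      · have hs : y / 2 - (y / 2) ^ 3 / 4 < Real.sin (y / 2) := by
          have := Real.sin_gt_sub_cube (by linarith : (0:ℝ) < y / 2)
          nlinarith [pow_pos hy0 3]
        have hysq : y ^ 2 ≤ 9 / 4 := by nlinarith
        have hsnn : 0 ≤ y / 2 - (y / 2) ^ 3 / 4 := by nlinarith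
        have hcos : Real.cos y = 1 - 2 * Real.sin (y / 2) ^ 2 := by
          have h2 := Real.cos_two_mul (y / 2)
          have h3 := Real.sin_sq_add_cos_sq (y / 2)
          have h4 : (2:ℝ) * (y / 2) = y := by ring
          rw [h4] at h2; linarith
        have hw2 : (y / 2 - (y / 2) ^ 3 / 4) ^ 2 ≤ Real.sin (y / 2) ^ 2 := by nlinarith
        nlinarith [hw2, pow_nonneg hy 6, mul_nonneg (mul_nonneg (mul_nonneg hy hy) hy) (by linarith : (0:ℝ) ≤ 3 / 2 - y)]
    · have h1 := Real.cos_le_one y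
      nlinarith [mul_nonneg (sq_nonneg y) (by linarith : (0:ℝ) ≤ y - 3 / 2)]
  have hx := h |x| (abs_nonneg x)
  rwa [sq_abs, Real.cos_abs] at hx

lemma abs_sq_eq (r x : ℝ) :
    ‖1 + (r : ℂ) * Complex.exp ((x : ℂ) * Complex.I)‖ ^ 2
      = (1 + r) ^ 2 - 2 * r * (1 - Real.cos x) := by
  have hz : (1 : ℂ) + (r : ℂ) * Complex.exp ((x : ℂ) * Complex.I)
      = ((1 + r * Real.cos x : ℝ) : ℂ) + ((r * Real.sin x : ℝ) : ℂ) * Complex.I := by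
    rw [Complex.exp_mul_I, ← Complex.ofReal_cos, ← Complex.ofReal_sin]
    push_cast
    ring
  rw [Complex.sq_norm, hz, Complex.normSq_add_mul_I]
  linear_combination r ^ 2 * Real.sin_sq_add_cos_sq x


/-- The variance `σ²(t) = ∑_{k≥1} k² tᵏ/(1+tᵏ)²` associated to `∏(1+zᵏ)`
(the `k = 0` term vanishes). -/
noncomputable def sigma2 (t : ℝ) : ℝ :=
  ∑' k : ℕ, (k : ℝ) ^ 2 * t ^ k / (1 + t ^ k) ^ 2

/-- The sum of third absolute central moments
`Γ₃(t) = ∑_{k≥1} k³(t^{3k}+tᵏ)/(1+tᵏ)⁴` (the `k = 0` term vanishes). -/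
noncomputable def Gamma3 (t : ℝ) : ℝ :=
  ∑' k : ℕ, (k : ℝ) ^ 3 * (t ^ (3 * k) + t ^ k) / (1 + t ^ k) ^ 4

section main
variable {t : ℝ}

lemma d2_summable (ht0 : 0 < t) (ht1 : t < 1) :
    Summable (fun k : ℕ => (k : ℝ) ^ 2 * t ^ k / (1 + t ^ k) ^ 2) := by
  refine Summable.of_nonneg_of_le (fun k => by positivity)
    (fun k => ?_) (summable_pow_mul_geometric_of_norm_lt_one 2
      (by rwa [Real.norm_eq_abs, abs_of_pos ht0]))
  have h1 : (1:ℝ) ≤ (1 + t ^ k) ^ 2 := by nlinarith [pow_pos ht0 k]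
  calc (k : ℝ) ^ 2 * t ^ k / (1 + t ^ k) ^ 2 ≤ (k : ℝ) ^ 2 * t ^ k / 1 := by
        apply div_le_div_of_nonneg_left (by positivity) one_pos h1
    _ = (k : ℝ) ^ 2 * t ^ k := by ring

lemma d3_summable (ht0 : 0 < t) (ht1 : t < 1) :
    Summable (fun k : ℕ => (k : ℝ) ^ 3 * t ^ k / (1 + t ^ k) ^ 2) := by
  refine Summable.of_nonneg_of_le (fun k => by positivity)
    (fun k => ?_) (summable_pow_mul_geometric_of_norm_lt_one 3
      (by rwa [Real.norm_eq_abs, abs_of_pos ht0]))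
  have h1 : (1:ℝ) ≤ (1 + t ^ k) ^ 2 := by nlinarith [pow_pos ht0 k]
  calc (k : ℝ) ^ 3 * t ^ k / (1 + t ^ k) ^ 2 ≤ (k : ℝ) ^ 3 * t ^ k / 1 := by
        apply div_le_div_of_nonneg_left (by positivity) one_pos h1
    _ = (k : ℝ) ^ 3 * t ^ k := by ring

lemma g3_summable (ht0 : 0 < t) (ht1 : t < 1) :
    Summable (fun k : ℕ => (k : ℝ) ^ 3 * (t ^ (3 * k) + t ^ k) / (1 + t ^ k) ^ 4) := by
  refine Summable.of_nonneg_of_le (fun k => by positivity)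
    (fun k => ?_) (((summable_pow_mul_geometric_of_norm_lt_one 3
      (by rwa [Real.norm_eq_abs, abs_of_pos ht0] : ‖t‖ < 1)).mul_left 2))
  have hq := pow_pos ht0 k
  have h1 : (1:ℝ) ≤ (1 + t ^ k) ^ 4 := by nlinarith [sq_nonneg (t ^ k)]
  have h2 : t ^ (3 * k) ≤ t ^ k := by
    have hle : t ^ k ≤ 1 := pow_le_one₀ ht0.le ht1.le
    rw [pow_mul']
    nlinarith [hq, hle, mul_nonneg hq.le (mul_nonneg hq.le hq.le), sq_nonneg (t ^ k)]
  calc (k : ℝ) ^ 3 * (t ^ (3*k) + t ^ k) / (1 + t ^ k) ^ 4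
      ≤ (k : ℝ) ^ 3 * (t ^ (3*k) + t ^ k) / 1 := by
        apply div_le_div_of_nonneg_left (by positivity) one_pos h1
    _ ≤ 2 * ((k:ℝ) ^ 3 * t ^ k) := by rw [div_one]; nlinarith [Nat.cast_nonneg (α := ℝ) k, pow_nonneg (Nat.cast_nonneg (α := ℝ) k) 3]

lemma sigma2_pos (ht0 : 0 < t) (ht1 : t < 1) : 0 < sigma2 t := by
  have h := Summable.le_tsum (d2_summable ht0 ht1) 1 (fun j _ => by positivity)
  have : (0:ℝ) < (1:ℝ) ^ 2 * t ^ 1 / (1 + t ^ 1) ^ 2 := by positivity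
  calc (0:ℝ) < ((1:ℕ) : ℝ) ^ 2 * t ^ 1 / (1 + t ^ 1) ^ 2 := by push_cast; positivity
    _ ≤ sigma2 t := h

lemma Gamma3_pos (ht0 : 0 < t) (ht1 : t < 1) : 0 < Gamma3 t := by
  have h := Summable.le_tsum (g3_summable ht0 ht1) 1 (fun j _ => by positivity)
  calc (0:ℝ) < ((1:ℕ) : ℝ) ^ 3 * (t ^ (3 * 1) + t ^ 1) / (1 + t ^ 1) ^ 4 := by push_cast; positivity
    _ ≤ Gamma3 t := h

end main

/-- Gaussian-type bound on the characteristic function of `Z_t` for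
`|θ| ≤ σ(t)³/(4Γ₃(t))`:
`∏_{k≥1} |1 + tᵏ e^{ikθ/σ(t)}|/(1+tᵏ) ≤ e^{−θ²/3}`.
(The `k = 0` factor of the product equals `1`.) -/
theorem charFun_bound_small_theta
    (t : ℝ) (ht : t ∈ Set.Ioo (0 : ℝ) 1) (θ : ℝ)
    (hθ : |θ| ≤ Real.sqrt (sigma2 t) ^ 3 / (4 * Gamma3 t)) :
    (∏' k : ℕ, ‖1 + (t : ℂ) ^ k *
          Complex.exp (Complex.I * (k : ℂ) * (θ : ℂ) / ((Real.sqrt (sigma2 t) : ℝ) : ℂ))‖ /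
        (1 + t ^ k)) ≤ Real.exp (-θ ^ 2 / 3) := by
  obtain ⟨ht0, ht1⟩ := ht
  have hσ := sigma2_pos ht0 ht1
  have hΓ := Gamma3_pos ht0 ht1
  set s : ℝ := Real.sqrt (sigma2 t) with hs_def
  have hspos : 0 < s := Real.sqrt_pos.mpr hσ
  have hs2 : s ^ 2 = sigma2 t := Real.sq_sqrt hσ.le
  set u : ℝ := θ / s with hu_def
  set a : ℕ → ℝ := fun k => ‖1 + (t : ℂ) ^ k *
          Complex.exp (Complex.I * (k : ℂ) * (θ : ℂ) / ((s : ℝ) : ℂ))‖ / (1 + t ^ k)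
    with ha_def
  set c : ℕ → ℝ := fun k => t ^ k * (1 - Real.cos (k * u)) / (1 + t ^ k) ^ 2 with hc_def
  have hq : ∀ k : ℕ, 0 < t ^ k := fun k => pow_pos ht0 k
  have hden : ∀ k : ℕ, (0:ℝ) < 1 + t ^ k := fun k => by linarith [hq k]
  have hgeo : Summable (fun k : ℕ => t ^ k) := summable_geometric_of_lt_one ht0.le ht1
  -- rewrite the exponent
  have hexp_eq : ∀ k : ℕ, Complex.I * (k : ℂ) * (θ : ℂ) / ((s : ℝ) : ℂ)
      = (((k : ℝ) * u : ℝ) : ℂ) * Complex.I := by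
    intro k
    rw [hu_def]
    push_cast
    ring
  have hcast : ∀ k : ℕ, ((t : ℂ)) ^ k = ((t ^ k : ℝ) : ℂ) := fun k => by push_cast; ring
  have habs2 : ∀ k : ℕ, ‖1 + (t : ℂ) ^ k *
          Complex.exp (Complex.I * (k : ℂ) * (θ : ℂ) / ((s : ℝ) : ℂ))‖ ^ 2
      = (1 + t ^ k) ^ 2 - 2 * t ^ k * (1 - Real.cos ((k : ℝ) * u)) := by
    intro k
    rw [hexp_eq k, hcast k]
    exact abs_sq_eq (t ^ k) ((k : ℝ) * u)
  have ha_nonneg : ∀ k, 0 ≤ a k := fun k => div_nonneg (norm_nonneg _) (hden k).le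
  have hc_nonneg : ∀ k, 0 ≤ c k := by
    intro k
    have := Real.cos_le_one ((k : ℝ) * u)
    have h1 : (0:ℝ) ≤ 1 - Real.cos ((k:ℝ) * u) := by linarith
    rw [hc_def]
    positivity
  have ha_le : ∀ k, a k ≤ Real.exp (-(c k)) := by
    intro k
    have hsq : a k ^ 2 ≤ Real.exp (-(c k)) ^ 2 := by
      have h1 : a k ^ 2 = 1 - 2 * c k := by
        rw [ha_def, hc_def]
        simp only
        rw [div_pow, habs2 k]
        field_simp
      have h2 : Real.exp (-(c k)) ^ 2 = Real.exp (-(2 * c k)) := by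
        rw [sq, ← Real.exp_add]
        congr 1
        ring
      have h3 : 1 - 2 * c k ≤ Real.exp (-(2 * c k)) := by
        have := Real.add_one_le_exp (-(2 * c k))
        linarith
      rw [h1, h2]; exact h3
    calc a k = Real.sqrt (a k ^ 2) := (Real.sqrt_sq (ha_nonneg k)).symm
      _ ≤ Real.sqrt (Real.exp (-(c k)) ^ 2) := Real.sqrt_le_sqrt hsq
      _ = Real.exp (-(c k)) := Real.sqrt_sq (Real.exp_pos _).le
  have habs_low : ∀ k : ℕ, 1 - t ^ k ≤ ‖1 + (t : ℂ) ^ k *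
          Complex.exp (Complex.I * (k : ℂ) * (θ : ℂ) / ((s : ℝ) : ℂ))‖ := by
    intro k
    set w : ℂ := (t : ℂ) ^ k *
          Complex.exp (Complex.I * (k : ℂ) * (θ : ℂ) / ((s : ℝ) : ℂ)) with hw
    have hwabs : ‖w‖ = t ^ k := by
      rw [hw, hexp_eq k, norm_mul, Complex.norm_exp_ofReal_mul_I, hcast k,
        Complex.norm_real, Real.norm_eq_abs, abs_of_pos (hq k), mul_one]
    have := norm_sub_norm_le (1 : ℂ) (-w)
    simp only [norm_one, norm_neg, sub_neg_eq_add] at this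
    rw [hwabs] at this
    -- `this : 1 - Complex.abs w ≤ Complex.abs (1 + w)`? check form
    exact this
  have ha_le1 : ∀ k, a k ≤ 1 := by
    intro k
    rw [ha_def]
    simp only
    rw [div_le_one (hden k)]
    calc ‖1 + (t : ℂ) ^ k *
          Complex.exp (Complex.I * (k : ℂ) * (θ : ℂ) / ((s : ℝ) : ℂ))‖
        ≤ ‖(1 : ℂ)‖ + ‖(t : ℂ) ^ k *
          Complex.exp (Complex.I * (k : ℂ) * (θ : ℂ) / ((s : ℝ) : ℂ))‖ := norm_add_le _ _
      _ = 1 + t ^ k := by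
          rw [norm_one, norm_mul, hexp_eq k, Complex.norm_exp_ofReal_mul_I, hcast k,
            Complex.norm_real, Real.norm_eq_abs, abs_of_pos (hq k), mul_one]
  have ha_pos : ∀ k, 0 < a k := by
    intro k
    rcases Nat.eq_zero_or_pos k with rfl | hk
    · have h0 : a 0 = 1 := by
        rw [ha_def]
        simp [Complex.exp_zero]
        rw [show (1:ℂ) + 1 = 2 by norm_num, Complex.norm_two]
        norm_num
      rw [h0]; norm_num
    · have hq1 : t ^ k < 1 := pow_lt_one₀ ht0.le ht1 hk.ne'
      have := habs_low k
      rw [ha_def]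
      simp only
      apply div_pos _ (hden k)
      linarith
  -- log bounds
  have hlog_low : ∀ k : ℕ, -(Real.log (a k)) ≤ t ^ k + t ^ k * (1 - t)⁻¹ := by
    intro k
    rcases Nat.eq_zero_or_pos k with rfl | hk
    · have h0 : a 0 = 1 := by
        rw [ha_def]
        simp [Complex.exp_zero]
        rw [show (1:ℂ) + 1 = 2 by norm_num, Complex.norm_two]
        norm_num
      rw [h0, Real.log_one, neg_zero]
      have : (0:ℝ) < 1 - t := by linarith
      positivity
    · have hq1 : t ^ k < 1 := pow_lt_one₀ ht0.le ht1 hk.ne'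
      have hqt : t ^ k ≤ t := by
        calc t ^ k ≤ t ^ 1 := pow_le_pow_of_le_one ht0.le ht1.le hk
          _ = t := pow_one t
      have hb : (1 - t ^ k) / (1 + t ^ k) ≤ a k := by
        rw [ha_def]
        simp only
        exact div_le_div_of_nonneg_right (habs_low k) (hden k).le
      have hbpos : (0:ℝ) < (1 - t ^ k) / (1 + t ^ k) := div_pos (by linarith) (hden k)
      have hlm : Real.log ((1 - t ^ k) / (1 + t ^ k)) ≤ Real.log (a k) :=
        Real.log_le_log hbpos hb
      have hsplit : Real.log ((1 - t ^ k) / (1 + t ^ k))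
          = Real.log (1 - t ^ k) - Real.log (1 + t ^ k) :=
        Real.log_div (by linarith) (by linarith [hden k])
      have h1 : Real.log (1 + t ^ k) ≤ t ^ k := by
        have := Real.log_le_sub_one_of_pos (hden k)
        linarith
      have h2 : -(Real.log (1 - t ^ k)) ≤ t ^ k * (1 - t)⁻¹ := by
        have hpos : (0:ℝ) < 1 - t ^ k := by linarith
        have hinv := Real.log_le_sub_one_of_pos (inv_pos.mpr hpos)
        rw [Real.log_inv] at hinv
        have he : (1 - t ^ k)⁻¹ - 1 = t ^ k * (1 - t ^ k)⁻¹ := by field_simp; ring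
        have hmono : t ^ k * (1 - t ^ k)⁻¹ ≤ t ^ k * (1 - t)⁻¹ := by
          apply mul_le_mul_of_nonneg_left _ (hq k).le
          exact inv_anti₀ (by linarith) (by linarith)
        linarith
      linarith
  have hneg_summable : Summable (fun k => -(Real.log (a k))) :=
    Summable.of_nonneg_of_le
      (fun k => neg_nonneg.mpr (Real.log_nonpos (ha_nonneg k) (ha_le1 k)))
      hlog_low (hgeo.add (hgeo.mul_right _))
  have hlogsum : Summable (fun k => Real.log (a k)) := by
    have := hneg_summable.neg
    simpa using this
  have hcsum : Summable c := by
    refine Summable.of_nonneg_of_le hc_nonneg (fun k => ?_) (hgeo.mul_left 2)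
    have hcos := Real.neg_one_le_cos ((k:ℝ) * u)
    have hcos1 := Real.cos_le_one ((k:ℝ) * u)
    have h1 : c k ≤ t ^ k * (1 - Real.cos ((k:ℝ) * u)) := by
      rw [hc_def]
      simp only
      apply div_le_self (by nlinarith [hq k]) (by nlinarith [hq k])
    nlinarith [hq k]
  have hprod_eq : (∏' k, a k) = Real.exp (∑' k, Real.log (a k)) := by
    exact (Real.rexp_tsum_eq_tprod ha_pos hlogsum).symm
  have hTS : (∑' k, Real.log (a k)) ≤ -(∑' k, c k) := by
    rw [← tsum_neg]
    refine Summable.tsum_le_tsum (fun k => ?_) hlogsum hcsum.neg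
    have := (Real.log_le_iff_le_exp (ha_pos k)).mpr (ha_le k)
    linarith
  -- core sum estimate
  have hd2 := d2_summable ht0 ht1
  have hd3 := d3_summable ht0 ht1
  have hg3 := g3_summable ht0 ht1
  have key : ∀ k : ℕ, u ^ 2 / 2 * ((k:ℝ) ^ 2 * t ^ k / (1 + t ^ k) ^ 2)
      ≤ c k + |u| ^ 3 / 3 * ((k:ℝ) ^ 3 * t ^ k / (1 + t ^ k) ^ 2) := by
    intro k
    have h := cos_lb ((k:ℝ) * u)
    have hp : (0:ℝ) ≤ t ^ k / (1 + t ^ k) ^ 2 := by positivity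
    have h2 := mul_le_mul_of_nonneg_left h hp
    have habs : |(k:ℝ) * u| ^ 3 = (k:ℝ) ^ 3 * |u| ^ 3 := by
      rw [abs_mul, Nat.abs_cast, mul_pow]
    rw [habs] at h2
    have e1 : t ^ k / (1 + t ^ k) ^ 2 * (((k:ℝ) * u) ^ 2 / 2 - (k:ℝ) ^ 3 * |u| ^ 3 / 3)
        = u ^ 2 / 2 * ((k:ℝ) ^ 2 * t ^ k / (1 + t ^ k) ^ 2)
          - |u| ^ 3 / 3 * ((k:ℝ) ^ 3 * t ^ k / (1 + t ^ k) ^ 2) := by ring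
    have e2 : t ^ k / (1 + t ^ k) ^ 2 * (1 - Real.cos ((k:ℝ) * u)) = c k := by
      rw [hc_def]; ring
    rw [e1, e2] at h2
    linarith
  have hsum1 : u ^ 2 / 2 * sigma2 t
      ≤ (∑' k, c k) + |u| ^ 3 / 3 * (∑' k : ℕ, (k:ℝ) ^ 3 * t ^ k / (1 + t ^ k) ^ 2) := by
    have hl : u ^ 2 / 2 * sigma2 t
        = ∑' k : ℕ, u ^ 2 / 2 * ((k:ℝ) ^ 2 * t ^ k / (1 + t ^ k) ^ 2) := by
      rw [sigma2, tsum_mul_left]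
    have hr : (∑' k : ℕ, (c k + |u| ^ 3 / 3 * ((k:ℝ) ^ 3 * t ^ k / (1 + t ^ k) ^ 2)))
        = (∑' k, c k) + |u| ^ 3 / 3 * (∑' k : ℕ, (k:ℝ) ^ 3 * t ^ k / (1 + t ^ k) ^ 2) := by
      rw [Summable.tsum_add hcsum (hd3.mul_left _), tsum_mul_left]
    rw [hl, ← hr]
    exact Summable.tsum_le_tsum key (hd2.mul_left _) (hcsum.add (hd3.mul_left _))
  have hd3g : (∑' k : ℕ, (k:ℝ) ^ 3 * t ^ k / (1 + t ^ k) ^ 2) ≤ 2 * Gamma3 t := by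
    rw [Gamma3, ← tsum_mul_left]
    refine Summable.tsum_le_tsum (fun k => ?_) hd3 (hg3.mul_left 2)
    have hqk := hq k
    have h3k : t ^ (3 * k) = (t ^ k) ^ 3 := by rw [pow_mul']
    rw [h3k, show (2:ℝ) * ((k:ℝ) ^ 3 * ((t ^ k) ^ 3 + t ^ k) / (1 + t ^ k) ^ 4)
      = (2 * ((k:ℝ) ^ 3 * ((t ^ k) ^ 3 + t ^ k))) / (1 + t ^ k) ^ 4 from by ring,
      div_le_div_iff₀ (by positivity) (by positivity)]
    nlinarith [mul_nonneg (mul_nonneg (mul_nonneg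
      (pow_nonneg (Nat.cast_nonneg (α := ℝ) k) 3) hqk.le)
      (sq_nonneg (t ^ k - 1))) (sq_nonneg (1 + t ^ k))]
  have hS : θ ^ 2 / 3 ≤ ∑' k, c k := by
    have hu2 : u ^ 2 / 2 * sigma2 t = θ ^ 2 / 2 := by
      rw [hu_def, ← hs2]
      field_simp
    have huabs : |u| ^ 3 = |θ| ^ 3 / s ^ 3 := by
      rw [hu_def, abs_div, abs_of_pos hspos, div_pow]
    have hθ3 : |θ| ^ 3 ≤ θ ^ 2 * (s ^ 3 / (4 * Gamma3 t)) := by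
      have he : |θ| ^ 3 = θ ^ 2 * |θ| := by rw [← sq_abs]; ring
      rw [he]
      exact mul_le_mul_of_nonneg_left hθ (sq_nonneg θ)
    have h1 : |u| ^ 3 / 3 * (∑' k : ℕ, (k:ℝ) ^ 3 * t ^ k / (1 + t ^ k) ^ 2)
        ≤ |u| ^ 3 / 3 * (2 * Gamma3 t) :=
      mul_le_mul_of_nonneg_left hd3g (by positivity)
    have h2 : |u| ^ 3 / 3 * (2 * Gamma3 t) = 2 * Gamma3 t / 3 * (|θ| ^ 3 / s ^ 3) := by
      rw [huabs]; ring
    have h3 : 2 * Gamma3 t / 3 * (|θ| ^ 3 / s ^ 3)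
        ≤ 2 * Gamma3 t / 3 * (θ ^ 2 * (s ^ 3 / (4 * Gamma3 t)) / s ^ 3) := by
      apply mul_le_mul_of_nonneg_left _ (by positivity)
      exact div_le_div_of_nonneg_right hθ3 (by positivity)
    have h4 : 2 * Gamma3 t / 3 * (θ ^ 2 * (s ^ 3 / (4 * Gamma3 t)) / s ^ 3) = θ ^ 2 / 6 := by
      field_simp
      ring
    rw [hu2] at hsum1
    linarith
  calc (∏' k, a k) = Real.exp (∑' k, Real.log (a k)) := hprod_eq
    _ ≤ Real.exp (-θ ^ 2 / 3) := by
      apply Real.exp_le_exp.mpr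
      have : -(∑' k, c k) ≤ -(θ ^ 2 / 3) := by linarith
      calc (∑' k, Real.log (a k)) ≤ -(∑' k, c k) := hTS
        _ ≤ -θ ^ 2 / 3 := by linarith
end
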